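/- arXiv:1807.00580 — 5 statements merged into one kernel-verified Lean document; each statement's English description precedes it below -/
import Mathlib

section
/- For every generalized Petersen graph GP(n,k) with n ≥ 3 and 1 ≤ k < n/2, the edge metric dimension satisfies β_E(GP(n,k)) ≥ 3. -/
open SimpleGraph

/-- Distance from a vertex to an edge: `d(w,e) = min over endpoints`. -/
noncomputable def edgeDist {V : Type*} (G : SimpleGraph V) (w : V) (e : Sym2 V) : ℕ :=
  Sym2.lift ⟨fun x y => min (G.dist w x) (G.dist w y), fun x y => min_comm _ _⟩ e

/-- `S` is an edge metric generator: distinct edges get distinct distance vectors. -/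
def IsEdgeGenerator {V : Type*} (G : SimpleGraph V) (S : Set V) : Prop :=
  ∀ e₁ ∈ G.edgeSet, ∀ e₂ ∈ G.edgeSet,
    (∀ w ∈ S, edgeDist G w e₁ = edgeDist G w e₂) → e₁ = e₂

/-- The edge metric dimension: minimum cardinality of an edge metric generator. -/
noncomputable def edgeMetricDim {V : Type*} (G : SimpleGraph V) : ℕ :=
  sInf {n | ∃ S : Set V, S.Finite ∧ S.ncard = n ∧ IsEdgeGenerator G S}

/-- `S` resolves all pairs of vertices. -/
def IsResolving {V : Type*} (G : SimpleGraph V) (S : Set V) : Prop :=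
  ∀ x y : V, (∀ w ∈ S, G.dist w x = G.dist w y) → x = y

/-- The metric dimension. -/
noncomputable def metricDim {V : Type*} (G : SimpleGraph V) : ℕ :=
  sInf {n | ∃ S : Set V, S.Finite ∧ S.ncard = n ∧ IsResolving G S}

/-- The generalized Petersen graph `GP n k`: outer vertices `Sum.inl i` (the `uᵢ`),
inner vertices `Sum.inr i` (the `vᵢ`). -/
def GP (n k : ℕ) : SimpleGraph (Fin n ⊕ Fin n) :=
  SimpleGraph.fromRel (fun a b =>
    match a, b with
    | Sum.inl i, Sum.inl j => (j : ℕ) = ((i : ℕ) + 1) % n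
    | Sum.inl i, Sum.inr j => i = j
    | Sum.inr i, Sum.inr j => (j : ℕ) = ((i : ℕ) + k) % n
    | _, _ => False)


/- ----------------- auxiliary lemmas ----------------- -/

lemma modred {a n : ℕ} (h : a < 2 * n) : a % n = if a < n then a else a - n := by
  split
  · exact Nat.mod_eq_of_lt ‹_›
  · have h1 : a - n < n := by omega
    conv_lhs => rw [show a = (a - n) + n by omega]
    rw [Nat.add_mod_right, Nat.mod_eq_of_lt h1]

lemma edgeDist_mk {V : Type*} (G : SimpleGraph V) (w x y : V) :
    edgeDist G w s(x, y) = min (G.dist w x) (G.dist w y) := rfl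

lemma GP_adj_ll (n k : ℕ) (i j : Fin n) : (GP n k).Adj (Sum.inl i) (Sum.inl j) ↔
    i ≠ j ∧ ((j:ℕ) = ((i:ℕ)+1)%n ∨ (i:ℕ) = ((j:ℕ)+1)%n) := by
  simp [GP, SimpleGraph.fromRel_adj]

lemma GP_adj_lr (n k : ℕ) (i j : Fin n) : (GP n k).Adj (Sum.inl i) (Sum.inr j) ↔ i = j := by
  simp [GP, SimpleGraph.fromRel_adj]

lemma GP_adj_rr (n k : ℕ) (i j : Fin n) : (GP n k).Adj (Sum.inr i) (Sum.inr j) ↔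
    i ≠ j ∧ ((j:ℕ) = ((i:ℕ)+k)%n ∨ (i:ℕ) = ((j:ℕ)+k)%n) := by
  simp [GP, SimpleGraph.fromRel_adj]

lemma GP_adj_rl (n k : ℕ) (i j : Fin n) : (GP n k).Adj (Sum.inr i) (Sum.inl j) ↔ j = i := by
  simp [GP, SimpleGraph.fromRel_adj]

/-- GP is connected -/
lemma GP_connected (n k : ℕ) (hn : 3 ≤ n) : (GP n k).Connected := by
  have hn0 : 0 < n := by omega
  have houter : ∀ m : ℕ, ∀ h : m < n, (GP n k).Reachable (Sum.inl ⟨0, hn0⟩) (Sum.inl ⟨m, h⟩) := by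
    intro m
    induction m with
    | zero => intro h; rfl
    | succ m ih =>
      intro h
      have hm : m < n := by omega
      refine (ih hm).trans (Adj.reachable ?_)
      rw [GP_adj_ll]
      refine ⟨?_, Or.inl ?_⟩
      · simp only [ne_eq, Fin.mk.injEq]; omega
      · show m + 1 = (m + 1) % n
        rw [Nat.mod_eq_of_lt h]
  have hall : ∀ v : Fin n ⊕ Fin n, (GP n k).Reachable (Sum.inl ⟨0, hn0⟩) v := by
    intro v
    match v with
    | Sum.inl i =>
      have := houter i.val i.isLt
      simpa using this
    | Sum.inr i =>
      have h1 : (GP n k).Reachable (Sum.inl ⟨0, hn0⟩) (Sum.inl i) := by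
        simpa using houter i.val i.isLt
      exact h1.trans (Adj.reachable ((GP_adj_lr n k i i).mpr rfl))
  haveI : Nonempty (Fin n ⊕ Fin n) := ⟨Sum.inl ⟨0, hn0⟩⟩
  exact ⟨fun u v => (hall u).symm.trans (hall v)⟩

/-- every vertex of GP has three distinct neighbors -/
lemma GP_three_neighbors (n k : ℕ) (hn : 3 ≤ n) (hk1 : 1 ≤ k) (hk2 : 2 * k < n)
    (x : Fin n ⊕ Fin n) :
    ∃ a b c : Fin n ⊕ Fin n, a ≠ b ∧ a ≠ c ∧ b ≠ c ∧
      (GP n k).Adj x a ∧ (GP n k).Adj x b ∧ (GP n k).Adj x c := by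
  match x with
  | Sum.inl i =>
    have hi := i.isLt
    set one : Fin n := ⟨1, by omega⟩ with hone
    set nm1 : Fin n := ⟨n - 1, by omega⟩ with hnm1
    have hva : ((i + one : Fin n) : ℕ) = ((i : ℕ) + 1) % n := Fin.val_add _ _
    have hvb : ((i + nm1 : Fin n) : ℕ) = ((i : ℕ) + (n - 1)) % n := Fin.val_add _ _
    have hlt1 : ((i : ℕ) + (n - 1)) % n < n := Nat.mod_lt _ (by omega)
    have hlt0 : ((i : ℕ) + 1) % n < n := Nat.mod_lt _ (by omega)
    refine ⟨Sum.inl (i + one), Sum.inl (i + nm1), Sum.inr i, ?_, by simp, by simp, ?_, ?_, ?_⟩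
    · intro h
      have h2 := congrArg Fin.val (Sum.inl.inj h)
      rw [hva, hvb, modred (by omega), modred (by omega)] at h2
      split at h2 <;> split at h2 <;> omega
    · rw [GP_adj_ll]
      refine ⟨?_, Or.inl hva⟩
      intro h
      have h2 := congrArg Fin.val h
      rw [hva, modred (by omega)] at h2
      split at h2 <;> omega
    · rw [GP_adj_ll]
      refine ⟨?_, Or.inr ?_⟩
      · intro h
        have h2 := congrArg Fin.val h
        rw [hvb, modred (by omega)] at h2
        split at h2 <;> omega
      · rw [hvb, modred (a := (i : ℕ) + (n - 1)) (by omega)]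
        split <;> (rw [modred (by omega)]; split <;> omega)
    · rw [GP_adj_lr]
  | Sum.inr i =>
    have hi := i.isLt
    set kf : Fin n := ⟨k, by omega⟩ with hkf
    set nmk : Fin n := ⟨n - k, by omega⟩ with hnmk
    have hva : ((i + kf : Fin n) : ℕ) = ((i : ℕ) + k) % n := Fin.val_add _ _
    have hvb : ((i + nmk : Fin n) : ℕ) = ((i : ℕ) + (n - k)) % n := Fin.val_add _ _
    have hlt1 : ((i : ℕ) + (n - k)) % n < n := Nat.mod_lt _ (by omega)
    have hlt0 : ((i : ℕ) + k) % n < n := Nat.mod_lt _ (by omega)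
    refine ⟨Sum.inr (i + kf), Sum.inr (i + nmk), Sum.inl i, ?_, by simp, by simp, ?_, ?_, ?_⟩
    · intro h
      have h2 := congrArg Fin.val (Sum.inr.inj h)
      rw [hva, hvb, modred (by omega), modred (by omega)] at h2
      split at h2 <;> split at h2 <;> omega
    · rw [GP_adj_rr]
      refine ⟨?_, Or.inl hva⟩
      intro h
      have h2 := congrArg Fin.val h
      rw [hva, modred (by omega)] at h2
      split at h2 <;> omega
    · rw [GP_adj_rr]
      refine ⟨?_, Or.inr ?_⟩
      · intro h
        have h2 := congrArg Fin.val h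
        rw [hvb, modred (by omega)] at h2
        split at h2 <;> omega
      · rw [hvb, modred (a := (i : ℕ) + (n - k)) (by omega)]
        split <;> (rw [modred (by omega)]; split <;> omega)
    · rw [GP_adj_rl]

/-- In a connected graph a vertex with three distinct neighbors kills all
generators contained in a pair. -/
lemma no_pair_generator {V : Type*} {G : SimpleGraph V} (hconn : G.Connected)
    {x a b c : V} (hab : a ≠ b) (hac : a ≠ c) (hbc : b ≠ c)
    (ha : G.Adj x a) (hb : G.Adj x b) (hc : G.Adj x c)
    (y : V) (S : Set V) (hS : S ⊆ {x, y}) : ¬ IsEdgeGenerator G S := by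
  intro hgen
  set d : ℕ := G.dist y x with hd
  have key : ∀ p : V, G.Adj x p → d - 1 ≤ min d (G.dist y p) ∧ min d (G.dist y p) ≤ d := by
    intro p hp
    refine ⟨?_, min_le_left _ _⟩
    have htri : G.dist y x ≤ G.dist y p + G.dist p x := hconn.dist_triangle
    have hpx : G.dist p x ≤ 1 := by
      have := SimpleGraph.dist_le hp.symm.toWalk
      simpa using this
    omega
  have hcontr : ∀ p q : V, p ≠ q → G.Adj x p → G.Adj x q →
      min d (G.dist y p) = min d (G.dist y q) → False := by
    intro p q hpq hp hq heq
    have h1 : s(x, p) ∈ G.edgeSet := hp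
    have h2 : s(x, q) ∈ G.edgeSet := hq
    have := hgen _ h1 _ h2 ?_
    · exact hpq (Sym2.congr_right.mp this)
    · intro w hw
      rcases hS hw with rfl | hw'
      · rw [edgeDist_mk, edgeDist_mk]
        simp [SimpleGraph.dist_self]
      · rw [Set.mem_singleton_iff] at hw'
        subst hw'
        rw [edgeDist_mk, edgeDist_mk, ← hd]
        exact heq
  have hA := key a ha
  have hB := key b hb
  have hC := key c hc
  have : min d (G.dist y a) = min d (G.dist y b) ∨
      min d (G.dist y a) = min d (G.dist y c) ∨
      min d (G.dist y b) = min d (G.dist y c) := by omega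
  rcases this with h | h | h
  · exact hcontr a b hab ha hb h
  · exact hcontr a c hac ha hc h
  · exact hcontr b c hbc hb hc h

/-- In a connected graph, the set of all vertices is an edge generator. -/
lemma univ_generator {V : Type*} {G : SimpleGraph V} (hconn : G.Connected) :
    IsEdgeGenerator G Set.univ := by
  intro e₁ h₁ e₂ h₂ h
  induction e₁ using Sym2.ind with
  | _ a b =>
  induction e₂ using Sym2.ind with
  | _ u v =>
  have hadj1 : G.Adj a b := h₁
  have hne : a ≠ b := hadj1.ne
  have haz : min (G.dist a u) (G.dist a v) = 0 := by
    have ha0 : edgeDist G a s(a,b) = 0 := by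
      rw [edgeDist_mk, SimpleGraph.dist_self]; simp
    rw [h a (Set.mem_univ a), edgeDist_mk] at ha0
    exact ha0
  have hbz : min (G.dist b u) (G.dist b v) = 0 := by
    have hb0 : edgeDist G b s(a,b) = 0 := by
      rw [edgeDist_mk, SimpleGraph.dist_self]; simp
    rw [h b (Set.mem_univ b), edgeDist_mk] at hb0
    exact hb0
  rw [Nat.min_eq_zero_iff] at haz hbz
  have hau : a = u ∨ a = v := by
    rcases haz with h' | h'
    · exact Or.inl (hconn.dist_eq_zero_iff.mp h')
    · exact Or.inr (hconn.dist_eq_zero_iff.mp h')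
  have hbu : b = u ∨ b = v := by
    rcases hbz with h' | h'
    · exact Or.inl (hconn.dist_eq_zero_iff.mp h')
    · exact Or.inr (hconn.dist_eq_zero_iff.mp h')
  rw [Sym2.eq_iff]
  rcases hau with h1 | h1 <;> rcases hbu with h2 | h2
  · exact absurd (h1.trans h2.symm) hne
  · exact Or.inl ⟨h1, h2⟩
  · exact Or.inr ⟨h1, h2⟩
  · exact absurd (h1.trans h2.symm) hne

/-- For every generalized Petersen graph `GP(n,k)`, `β_E ≥ 3`. -/
theorem stmt3 (n k : ℕ) (hn : 3 ≤ n) (hk1 : 1 ≤ k) (hk2 : 2 * k < n) :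
    3 ≤ edgeMetricDim (GP n k) := by
  have hconn := GP_connected n k hn
  have hne : {m | ∃ S : Set (Fin n ⊕ Fin n), S.Finite ∧ S.ncard = m ∧
      IsEdgeGenerator (GP n k) S}.Nonempty :=
    ⟨(Set.univ : Set (Fin n ⊕ Fin n)).ncard,
      Set.univ, Set.finite_univ, rfl, univ_generator hconn⟩
  have hmem := Nat.sInf_mem hne
  obtain ⟨S, hfin, hcard, hgen⟩ := hmem
  rw [edgeMetricDim]
  by_contra h3
  push_neg at h3
  have hS2 : S.ncard ≤ 2 := by rw [hcard]; omega
  have hxy : ∃ x y : Fin n ⊕ Fin n, S ⊆ {x, y} := by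
    rcases Set.eq_empty_or_nonempty S with rfl | ⟨x, hx⟩
    · exact ⟨Sum.inl ⟨0, by omega⟩, Sum.inl ⟨0, by omega⟩, by simp⟩
    · rcases Set.eq_empty_or_nonempty (S \ {x}) with hd | ⟨y, hy⟩
      · refine ⟨x, x, fun z hz => ?_⟩
        by_cases hzx : z = x
        · simp [hzx]
        · exact absurd (Set.eq_empty_iff_forall_notMem.mp hd z ⟨hz, hzx⟩) not_false
      · refine ⟨x, y, fun z hz => ?_⟩
        by_contra hzxy
        simp only [Set.mem_insert_iff, Set.mem_singleton_iff, not_or] at hzxy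
        have hsub : {x, y, z} ⊆ S := by
          intro w hw
          rcases hw with rfl | rfl | rfl
          · exact hx
          · exact hy.1
          · exact hz
        have hyx : y ≠ x := hy.2
        have h3le : ({x, y, z} : Set (Fin n ⊕ Fin n)).ncard = 3 := by
          rw [Set.ncard_insert_of_notMem (by simp [Ne.symm hyx, Ne.symm hzxy.1])
            (Set.toFinite _),
            Set.ncard_pair (fun h => hzxy.2 h.symm)]
        have := Set.ncard_le_ncard hsub hfin
        omega
  obtain ⟨x, y, hSxy⟩ := hxy
  obtain ⟨a, b, c, hab, hac, hbc, ha, hb, hc⟩ := GP_three_neighbors n k hn hk1 hk2 x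
  exact no_pair_generator hconn hab hac hbc ha hb hc y S hSxy hgen
end

section
/- For every n ≥ 3, the edge metric dimension of the generalized Petersen graph GP(n,1) equals 3. -/
open SimpleGraph

namespace GPaux

/-- circular distance between residues -/
def cdv (n a b : ℕ) : ℕ := min ((a + n - b) % n) ((b + n - a) % n)

lemma mod_char {n a b : ℕ} (ha : a < n) (hb : b < n) :
    (a + n - b) % n = if b ≤ a then a - b else a + n - b := by
  split_ifs with h
  · have h1 : a + n - b = (a - b) + 1 * n := by omega
    rw [h1, Nat.add_mul_mod_self_right, Nat.mod_eq_of_lt (by omega)]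
  · exact Nat.mod_eq_of_lt (by omega)

lemma cdv_val {n a b : ℕ} (ha : a < n) (hb : b < n) :
    cdv n a b = if b ≤ a then min (a - b) (b + n - a) else min (a + n - b) (b - a) := by
  unfold cdv
  rw [mod_char ha hb, mod_char hb ha]
  split_ifs with h1 h2 h2 <;> omega

lemma succ_mod {n a : ℕ} (ha : a < n) : (a + 1) % n = if a + 1 = n then 0 else a + 1 := by
  split_ifs with h
  · simp [h]
  · exact Nat.mod_eq_of_lt (by omega)

lemma pred_mod {n a : ℕ} (hn : 1 ≤ n) (ha : a < n) :
    (a + n - 1) % n = if a = 0 then n - 1 else a - 1 := by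
  split_ifs with h
  · rw [h, Nat.mod_eq_of_lt (show 0 + n - 1 < n by omega)]; omega
  · have h1 : a + n - 1 = (a - 1) + 1 * n := by omega
    rw [h1, Nat.add_mul_mod_self_right, Nat.mod_eq_of_lt (by omega)]

lemma succ_mod_lt {n a : ℕ} (ha : a < n) : (a + 1) % n < n := by
  rw [succ_mod ha]; split_ifs <;> omega

lemma pred_mod_lt {n a : ℕ} (hn : 1 ≤ n) (ha : a < n) : (a + n - 1) % n < n := by
  rw [pred_mod hn ha]; split_ifs <;> omega

lemma pred_succ {n a : ℕ} (hn : 1 ≤ n) (ha : a < n) : ((a + n - 1) % n + 1) % n = a := by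
  rw [pred_mod hn ha]
  split_ifs with h
  · rw [Nat.sub_add_cancel hn, Nat.mod_self]; omega
  · rw [Nat.mod_eq_of_lt (by omega)]; omega

lemma succ_ne {n a : ℕ} (hn : 2 ≤ n) (ha : a < n) : (a + 1) % n ≠ a := by
  rw [succ_mod ha]; split_ifs <;> omega

lemma pred_ne {n a : ℕ} (hn : 2 ≤ n) (ha : a < n) : (a + n - 1) % n ≠ a := by
  rw [pred_mod (by omega) ha]; split_ifs <;> omega

lemma succ_ne_pred {n a : ℕ} (hn : 3 ≤ n) (ha : a < n) : (a + 1) % n ≠ (a + n - 1) % n := by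
  rw [succ_mod ha, pred_mod (by omega) ha]; split_ifs <;> omega

lemma cdv_symm (n a b : ℕ) : cdv n a b = cdv n b a := min_comm _ _

lemma cdv_self {n a : ℕ} (ha : a < n) : cdv n a a = 0 := by
  rw [cdv_val ha ha]; simp

lemma cdv_eq_zero {n a b : ℕ} (ha : a < n) (hb : b < n) : cdv n a b = 0 ↔ a = b := by
  rw [cdv_val ha hb]; split_ifs <;> omega

lemma cdv_lip_succ {n a b : ℕ} (ha : a < n) (hb : b < n) :
    cdv n a b ≤ cdv n a ((b + 1) % n) + 1 := by
  rw [cdv_val ha hb, cdv_val ha (succ_mod_lt hb), succ_mod hb]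
  split_ifs <;> omega

lemma cdv_lip_pred {n a b : ℕ} (hn : 1 ≤ n) (ha : a < n) (hb : b < n) :
    cdv n a b ≤ cdv n a ((b + n - 1) % n) + 1 := by
  rw [cdv_val ha hb, cdv_val ha (pred_mod_lt hn hb), pred_mod hn hb]
  split_ifs <;> omega

lemma cdv_lip_succ' {n a b : ℕ} (ha : a < n) (hb : b < n) :
    cdv n a ((b + 1) % n) ≤ cdv n a b + 1 := by
  rw [cdv_val ha hb, cdv_val ha (succ_mod_lt hb), succ_mod hb]
  split_ifs <;> omega

lemma cdv_lip_pred' {n a b : ℕ} (hn : 1 ≤ n) (ha : a < n) (hb : b < n) :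
    cdv n a ((b + n - 1) % n) ≤ cdv n a b + 1 := by
  rw [cdv_val ha hb, cdv_val ha (pred_mod_lt hn hb), pred_mod hn hb]
  split_ifs <;> omega

lemma cdv_dec {n a b : ℕ} (ha : a < n) (hb : b < n) (h : 0 < cdv n a b) :
    cdv n a ((b + 1) % n) + 1 = cdv n a b ∨ cdv n a ((b + n - 1) % n) + 1 = cdv n a b := by
  have hn : 1 ≤ n := by omega
  rw [cdv_val ha hb] at h
  rw [cdv_val ha hb, cdv_val ha (succ_mod_lt hb), cdv_val ha (pred_mod_lt hn hb),
    succ_mod hb, pred_mod hn hb]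
  split_ifs at h ⊢ <;> omega

lemma cdv_succ_self {n a : ℕ} (hn : 3 ≤ n) (ha : a < n) : cdv n a ((a + 1) % n) = 1 := by
  rw [cdv_val ha (succ_mod_lt ha), succ_mod ha]; split_ifs <;> omega

lemma cdv_pred_self {n a : ℕ} (hn : 3 ≤ n) (ha : a < n) : cdv n a ((a + n - 1) % n) = 1 := by
  rw [cdv_val ha (pred_mod_lt (by omega) ha), pred_mod (by omega) ha]; split_ifs <;> omega

lemma cdv_zero {n b : ℕ} (hb : b < n) : cdv n 0 b = min b (n - b) := by
  rw [cdv_val (by omega) hb]; split_ifs <;> omega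

lemma cdv_one {n b : ℕ} (hn : 3 ≤ n) (hb : b < n) :
    cdv n 1 b = if b ≤ 1 then min (1 - b) (b + n - 1) else min (b - 1) (1 + n - b) := by
  rw [cdv_val (by omega) hb]; split_ifs <;> omega

lemma spoke_inj {n j k : ℕ} (hn : 3 ≤ n) (hj : j < n) (hk : k < n)
    (h0 : cdv n 0 j = cdv n 0 k) (h1 : cdv n 1 j = cdv n 1 k) : j = k := by
  rw [cdv_zero hj, cdv_zero hk] at h0
  rw [cdv_one hn hj, cdv_one hn hk] at h1
  split_ifs at h1 <;> omega

lemma m0_val {n j : ℕ} (hn : 3 ≤ n) (hj : j < n) :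
    min (cdv n 0 j) (cdv n 0 ((j+1) % n)) = min j (n - 1 - j) := by
  rw [cdv_zero hj, cdv_zero (succ_mod_lt hj), succ_mod hj]
  split_ifs <;> omega

lemma m1_val {n j : ℕ} (hn : 3 ≤ n) (hj : j < n) :
    min (cdv n 1 j) (cdv n 1 ((j+1) % n)) = if j = 0 then 0 else min (j - 1) (n - j) := by
  rw [cdv_one hn hj, cdv_one hn (succ_mod_lt hj), succ_mod hj]
  split_ifs <;> omega

lemma edge_inj {n j k : ℕ} (hn : 3 ≤ n) (hj : j < n) (hk : k < n)
    (h0 : min (cdv n 0 j) (cdv n 0 ((j+1) % n)) = min (cdv n 0 k) (cdv n 0 ((k+1) % n)))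
    (h1 : min (cdv n 1 j) (cdv n 1 ((j+1) % n)) = min (cdv n 1 k) (cdv n 1 ((k+1) % n))) :
    j = k := by
  rw [m0_val hn hj, m0_val hn hk] at h0
  rw [m1_val hn hj, m1_val hn hk] at h1
  split_ifs at h1 <;> omega

variable {n : ℕ}

lemma adj_ll (hn : 3 ≤ n) {i j : Fin n} :
    (GP n 1).Adj (.inl i) (.inl j) ↔
      ((j : ℕ) = ((i : ℕ) + 1) % n ∨ (i : ℕ) = ((j : ℕ) + 1) % n) := by
  rw [GP, SimpleGraph.fromRel_adj]
  constructor
  · rintro ⟨-, h | h⟩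
    · exact Or.inl h
    · exact Or.inr h
  · rintro (h | h)
    · refine ⟨fun he => ?_, Or.inl h⟩
      rw [Sum.inl.injEq] at he
      subst he
      exact succ_ne (by omega) i.isLt h.symm
    · refine ⟨fun he => ?_, Or.inr h⟩
      rw [Sum.inl.injEq] at he
      subst he
      exact succ_ne (by omega) i.isLt h.symm

lemma adj_rr (hn : 3 ≤ n) {i j : Fin n} :
    (GP n 1).Adj (.inr i) (.inr j) ↔
      ((j : ℕ) = ((i : ℕ) + 1) % n ∨ (i : ℕ) = ((j : ℕ) + 1) % n) := by
  rw [GP, SimpleGraph.fromRel_adj]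
  constructor
  · rintro ⟨-, h | h⟩
    · exact Or.inl h
    · exact Or.inr h
  · rintro (h | h)
    · refine ⟨fun he => ?_, Or.inl h⟩
      rw [Sum.inr.injEq] at he
      subst he
      exact succ_ne (by omega) i.isLt h.symm
    · refine ⟨fun he => ?_, Or.inr h⟩
      rw [Sum.inr.injEq] at he
      subst he
      exact succ_ne (by omega) i.isLt h.symm

lemma adj_lr {i j : Fin n} :
    (GP n 1).Adj (.inl i) (.inr j) ↔ i = j := by
  rw [GP, SimpleGraph.fromRel_adj]
  constructor
  · rintro ⟨-, h | h⟩
    · exact h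
    · exact h.elim
  · rintro rfl
    exact ⟨by simp, Or.inl rfl⟩

lemma adj_rl {i j : Fin n} :
    (GP n 1).Adj (.inr i) (.inl j) ↔ i = j := by
  rw [(GP n 1).adj_comm, adj_lr, eq_comm]

/-- the candidate distance function -/
def Dd (n : ℕ) : (Fin n ⊕ Fin n) → (Fin n ⊕ Fin n) → ℕ
  | .inl i, .inl j => cdv n i j
  | .inl i, .inr j => cdv n i j + 1
  | .inr i, .inl j => cdv n i j + 1
  | .inr i, .inr j => cdv n i j

lemma Dd_self (x : Fin n ⊕ Fin n) : Dd n x x = 0 := by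
  rcases x with i | i <;> simp [Dd, cdv_self i.isLt]

lemma Dd_eq_zero (hn : 3 ≤ n) {x y : Fin n ⊕ Fin n} (h : Dd n x y = 0) : x = y := by
  rcases x with i | i <;> rcases y with j | j <;> simp only [Dd] at h
  · exact congrArg Sum.inl (Fin.ext ((cdv_eq_zero i.isLt j.isLt).mp h))
  · omega
  · omega
  · exact congrArg Sum.inr (Fin.ext ((cdv_eq_zero i.isLt j.isLt).mp h))

lemma Dd_lip (hn : 3 ≤ n) {x z y : Fin n ⊕ Fin n} (h : (GP n 1).Adj x z) :
    Dd n x y ≤ Dd n z y + 1 := by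
  have h1 : (1:ℕ) ≤ n := by omega
  rcases x with i | i <;> rcases z with k | k <;> rcases y with j | j <;>
    simp only [Dd]
  · rcases (adj_ll hn).mp h with hh | hh
    · rw [cdv_symm n i.val j.val, cdv_symm n k.val j.val]
      have := cdv_lip_succ j.isLt i.isLt; rw [← hh] at this; exact this
    · rw [cdv_symm n i.val j.val, cdv_symm n k.val j.val]
      have := cdv_lip_succ' j.isLt k.isLt; rw [← hh] at this; exact this
  · rcases (adj_ll hn).mp h with hh | hh
    · rw [cdv_symm n i.val j.val, cdv_symm n k.val j.val]
      have := cdv_lip_succ j.isLt i.isLt; rw [← hh] at this; omega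
    · rw [cdv_symm n i.val j.val, cdv_symm n k.val j.val]
      have := cdv_lip_succ' j.isLt k.isLt; rw [← hh] at this; omega
  · have hik : i = k := adj_lr.mp h
    subst hik; omega
  · have hik : i = k := adj_lr.mp h
    subst hik; omega
  · have hik : i = k := adj_rl.mp h
    subst hik; omega
  · have hik : i = k := adj_rl.mp h
    subst hik; omega
  · rcases (adj_rr hn).mp h with hh | hh
    · rw [cdv_symm n i.val j.val, cdv_symm n k.val j.val]
      have := cdv_lip_succ j.isLt i.isLt; rw [← hh] at this; omega
    · rw [cdv_symm n i.val j.val, cdv_symm n k.val j.val]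
      have := cdv_lip_succ' j.isLt k.isLt; rw [← hh] at this; omega
  · rcases (adj_rr hn).mp h with hh | hh
    · rw [cdv_symm n i.val j.val, cdv_symm n k.val j.val]
      have := cdv_lip_succ j.isLt i.isLt; rw [← hh] at this; exact this
    · rw [cdv_symm n i.val j.val, cdv_symm n k.val j.val]
      have := cdv_lip_succ' j.isLt k.isLt; rw [← hh] at this; exact this

lemma Dd_le_walk (hn : 3 ≤ n) {x y : Fin n ⊕ Fin n} (p : (GP n 1).Walk x y) :
    Dd n x y ≤ p.length := by
  induction p with
  | nil => simp [Dd_self]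
  | cons h p ih =>
      calc Dd n _ _ ≤ Dd n _ _ + 1 := Dd_lip hn h
      _ ≤ p.length + 1 := by omega
      _ = _ := by simp [Walk.length_cons]

lemma Dd_dec (hn : 3 ≤ n) {x y : Fin n ⊕ Fin n} (h : 0 < Dd n x y) :
    ∃ z, (GP n 1).Adj z y ∧ Dd n x z + 1 = Dd n x y := by
  have h1 : (1:ℕ) ≤ n := by omega
  rcases x with i | i <;> rcases y with j | j
  · simp only [Dd] at h ⊢
    rcases cdv_dec i.isLt j.isLt h with hd | hd
    · exact ⟨.inl ⟨(j.val+1) % n, succ_mod_lt j.isLt⟩,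
        (adj_ll hn).mpr (Or.inr rfl), hd⟩
    · refine ⟨.inl ⟨(j.val+n-1) % n, pred_mod_lt h1 j.isLt⟩,
        (adj_ll hn).mpr (Or.inl ?_), hd⟩
      exact (pred_succ h1 j.isLt).symm
  · simp only [Dd] at h ⊢
    by_cases hz : cdv n i.val j.val = 0
    · have : i = j := Fin.ext ((cdv_eq_zero i.isLt j.isLt).mp hz)
      subst this
      exact ⟨.inl i, adj_lr.mpr rfl, by simp [Dd, hz]⟩
    · rcases cdv_dec i.isLt j.isLt (by omega) with hd | hd
      · exact ⟨.inr ⟨(j.val+1) % n, succ_mod_lt j.isLt⟩,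
          (adj_rr hn).mpr (Or.inr rfl), by simp only [Dd]; omega⟩
      · refine ⟨.inr ⟨(j.val+n-1) % n, pred_mod_lt h1 j.isLt⟩,
          (adj_rr hn).mpr (Or.inl (pred_succ h1 j.isLt).symm), by simp only [Dd]; omega⟩
  · simp only [Dd] at h ⊢
    by_cases hz : cdv n i.val j.val = 0
    · have : i = j := Fin.ext ((cdv_eq_zero i.isLt j.isLt).mp hz)
      subst this
      exact ⟨.inr i, adj_rl.mpr rfl, by simp [Dd, hz]⟩
    · rcases cdv_dec i.isLt j.isLt (by omega) with hd | hd
      · exact ⟨.inl ⟨(j.val+1) % n, succ_mod_lt j.isLt⟩,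
          (adj_ll hn).mpr (Or.inr rfl), by simp only [Dd]; omega⟩
      · refine ⟨.inl ⟨(j.val+n-1) % n, pred_mod_lt h1 j.isLt⟩,
          (adj_ll hn).mpr (Or.inl (pred_succ h1 j.isLt).symm), by simp only [Dd]; omega⟩
  · simp only [Dd] at h ⊢
    rcases cdv_dec i.isLt j.isLt h with hd | hd
    · exact ⟨.inr ⟨(j.val+1) % n, succ_mod_lt j.isLt⟩,
        (adj_rr hn).mpr (Or.inr rfl), hd⟩
    · refine ⟨.inr ⟨(j.val+n-1) % n, pred_mod_lt h1 j.isLt⟩,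
        (adj_rr hn).mpr (Or.inl ?_), hd⟩
      exact (pred_succ h1 j.isLt).symm

lemma exists_walk (hn : 3 ≤ n) : ∀ (m : ℕ) (x y : Fin n ⊕ Fin n), Dd n x y ≤ m →
    ∃ p : (GP n 1).Walk x y, p.length ≤ m := by
  intro m
  induction m with
  | zero =>
      intro x y h
      have := Dd_eq_zero hn (by omega : Dd n x y = 0)
      subst this
      exact ⟨Walk.nil, by simp⟩
  | succ m ih =>
      intro x y h
      by_cases h0 : Dd n x y = 0
      · have := Dd_eq_zero hn h0
        subst this
        exact ⟨Walk.nil, by simp⟩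
      · obtain ⟨z, hadj, hz⟩ := Dd_dec hn (by omega : 0 < Dd n x y)
        obtain ⟨p, hp⟩ := ih x z (by omega)
        exact ⟨p.concat hadj, by rw [Walk.length_concat]; omega⟩

theorem dist_eq (hn : 3 ≤ n) (x y : Fin n ⊕ Fin n) :
    (GP n 1).dist x y = Dd n x y := by
  obtain ⟨p, hp⟩ := exists_walk hn (Dd n x y) x y le_rfl
  refine le_antisymm (le_trans (SimpleGraph.dist_le p) hp) ?_
  obtain ⟨q, hq⟩ := SimpleGraph.Reachable.exists_walk_length_eq_dist ⟨p⟩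
  rw [← hq]
  exact Dd_le_walk hn q

lemma dist_ll (hn : 3 ≤ n) (i j : Fin n) :
    (GP n 1).dist (.inl i) (.inl j) = cdv n i.val j.val := dist_eq hn _ _

lemma dist_lr (hn : 3 ≤ n) (i j : Fin n) :
    (GP n 1).dist (.inl i) (.inr j) = cdv n i.val j.val + 1 := dist_eq hn _ _

lemma dist_rl (hn : 3 ≤ n) (i j : Fin n) :
    (GP n 1).dist (.inr i) (.inl j) = cdv n i.val j.val + 1 := dist_eq hn _ _

lemma dist_rr (hn : 3 ≤ n) (i j : Fin n) :
    (GP n 1).dist (.inr i) (.inr j) = cdv n i.val j.val := dist_eq hn _ _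

lemma ed_mk (G : SimpleGraph (Fin n ⊕ Fin n)) (w : Fin n ⊕ Fin n) (x y : Fin n ⊕ Fin n) :
    edgeDist G w s(x, y) = min (G.dist w x) (G.dist w y) := rfl

lemma edge_cases (hn : 3 ≤ n) {e : Sym2 (Fin n ⊕ Fin n)} (he : e ∈ (GP n 1).edgeSet) :
    ∃ j : Fin n, e = s(.inl j, .inl ⟨(j.val+1) % n, succ_mod_lt j.isLt⟩)
      ∨ e = s(.inr j, .inr ⟨(j.val+1) % n, succ_mod_lt j.isLt⟩)
      ∨ e = s(.inl j, .inr j) := by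
  revert he
  refine Sym2.ind (fun x y he => ?_) e
  rw [SimpleGraph.mem_edgeSet] at he
  rcases x with i | i <;> rcases y with j | j
  · rcases (adj_ll hn).mp he with hh | hh
    · refine ⟨i, Or.inl ?_⟩
      have : j = (⟨(i.val+1) % n, succ_mod_lt i.isLt⟩ : Fin n) := Fin.ext hh
      rw [this]
    · refine ⟨j, Or.inl ?_⟩
      have : i = (⟨(j.val+1) % n, succ_mod_lt j.isLt⟩ : Fin n) := Fin.ext hh
      rw [Sym2.eq_swap, this]
  · have : i = j := adj_lr.mp he
    subst this
    exact ⟨i, Or.inr (Or.inr rfl)⟩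
  · have : i = j := adj_rl.mp he
    subst this
    exact ⟨i, Or.inr (Or.inr (Sym2.eq_swap))⟩
  · rcases (adj_rr hn).mp he with hh | hh
    · refine ⟨i, Or.inr (Or.inl ?_)⟩
      have : j = (⟨(i.val+1) % n, succ_mod_lt i.isLt⟩ : Fin n) := Fin.ext hh
      rw [this]
    · refine ⟨j, Or.inr (Or.inl ?_)⟩
      have : i = (⟨(j.val+1) % n, succ_mod_lt j.isLt⟩ : Fin n) := Fin.ext hh
      rw [Sym2.eq_swap, this]

lemma gen (hn : 3 ≤ n) : IsEdgeGenerator (GP n 1)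
    {.inl ⟨0, by omega⟩, .inl ⟨1, by omega⟩, .inr ⟨0, by omega⟩} := by
  intro e₁ h₁ e₂ h₂ hd
  have w0 := hd (.inl ⟨0, by omega⟩) (by simp)
  have w1 := hd (.inl ⟨1, by omega⟩) (by simp)
  have w2 := hd (.inr ⟨0, by omega⟩) (by simp)
  obtain ⟨j, hj⟩ := edge_cases hn h₁
  obtain ⟨k, hk⟩ := edge_cases hn h₂
  rcases hj with hj | hj | hj <;> rcases hk with hk | hk | hk <;> subst hj <;> subst hk <;>
    simp only [ed_mk, dist_ll hn, dist_lr hn, dist_rl hn, dist_rr hn, Fin.val_mk]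
      at w0 w1 w2
  · -- O O
    have hjk : j.val = k.val := edge_inj hn j.isLt k.isLt w0 w1
    rw [Fin.ext hjk]
  · omega
  · omega
  · omega
  · -- I I
    have h0 : min (cdv n 0 j.val) (cdv n 0 ((j.val+1) % n))
        = min (cdv n 0 k.val) (cdv n 0 ((k.val+1) % n)) := by omega
    have h1 : min (cdv n 1 j.val) (cdv n 1 ((j.val+1) % n))
        = min (cdv n 1 k.val) (cdv n 1 ((k.val+1) % n)) := by omega
    have hjk : j.val = k.val := edge_inj hn j.isLt k.isLt h0 h1
    rw [Fin.ext hjk]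
  · omega
  · omega
  · omega
  · -- S S
    have h0 : cdv n 0 j.val = cdv n 0 k.val := by omega
    have h1 : cdv n 1 j.val = cdv n 1 k.val := by omega
    have hjk : j.val = k.val := spoke_inj hn j.isLt k.isLt h0 h1
    rw [Fin.ext hjk]

def Fails (n : ℕ) (a b : Fin n ⊕ Fin n) : Prop :=
  ∃ e₁ e₂, e₁ ∈ (GP n 1).edgeSet ∧ e₂ ∈ (GP n 1).edgeSet ∧ e₁ ≠ e₂ ∧
    edgeDist (GP n 1) a e₁ = edgeDist (GP n 1) a e₂ ∧
    edgeDist (GP n 1) b e₁ = edgeDist (GP n 1) b e₂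

lemma Fails.symm {a b : Fin n ⊕ Fin n} (h : Fails n a b) : Fails n b a := by
  obtain ⟨e₁, e₂, m₁, m₂, hne, ha, hb⟩ := h
  exact ⟨e₁, e₂, m₁, m₂, hne, hb, ha⟩

lemma noTwo_ll (hn : 3 ≤ n) (p q : Fin n) : Fails n (.inl p) (.inl q) := by
  have h1 : (1:ℕ) ≤ n := by omega
  have f0 : cdv n p.val p.val = 0 := cdv_self p.isLt
  have f1 : cdv n p.val ((p.val+1) % n) = 1 := cdv_succ_self hn p.isLt
  have f2 : cdv n p.val ((p.val+n-1) % n) = 1 := cdv_pred_self hn p.isLt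
  by_cases hA : cdv n q.val p.val ≤ cdv n q.val ((p.val+1) % n)
  · refine ⟨s(.inl p, .inr p), s(.inl p, .inl (⟨(p.val+1) % n, succ_mod_lt p.isLt⟩ : Fin n)),
      (SimpleGraph.mem_edgeSet _).mpr (adj_lr.mpr rfl),
      (SimpleGraph.mem_edgeSet _).mpr ((adj_ll hn).mpr (Or.inl rfl)), ?_, ?_, ?_⟩
    · simp [Sym2.eq_iff]
    · simp only [ed_mk, dist_ll hn, dist_lr hn, Fin.val_mk]; omega
    · simp only [ed_mk, dist_ll hn, dist_lr hn, Fin.val_mk]; omega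
  · by_cases hB : cdv n q.val p.val ≤ cdv n q.val ((p.val+n-1) % n)
    · refine ⟨s(.inl p, .inr p), s(.inl (⟨(p.val+n-1) % n, pred_mod_lt h1 p.isLt⟩ : Fin n), .inl p),
        (SimpleGraph.mem_edgeSet _).mpr (adj_lr.mpr rfl),
        (SimpleGraph.mem_edgeSet _).mpr ((adj_ll hn).mpr (Or.inl (pred_succ h1 p.isLt).symm)),
        ?_, ?_, ?_⟩
      · simp [Sym2.eq_iff]
      · simp only [ed_mk, dist_ll hn, dist_lr hn, Fin.val_mk]; omega
      · simp only [ed_mk, dist_ll hn, dist_lr hn, Fin.val_mk]; omega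
    · have lip1 : cdv n q.val p.val ≤ cdv n q.val ((p.val+1) % n) + 1 :=
        cdv_lip_succ q.isLt p.isLt
      have lip0 : cdv n q.val p.val ≤ cdv n q.val ((p.val+n-1) % n) + 1 :=
        cdv_lip_pred h1 q.isLt p.isLt
      refine ⟨s(.inl (⟨(p.val+1) % n, succ_mod_lt p.isLt⟩ : Fin n), .inr (⟨(p.val+1) % n, succ_mod_lt p.isLt⟩ : Fin n)), s(.inl (⟨(p.val+n-1) % n, pred_mod_lt h1 p.isLt⟩ : Fin n), .inr (⟨(p.val+n-1) % n, pred_mod_lt h1 p.isLt⟩ : Fin n)),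
        (SimpleGraph.mem_edgeSet _).mpr (adj_lr.mpr rfl),
        (SimpleGraph.mem_edgeSet _).mpr (adj_lr.mpr rfl), ?_, ?_, ?_⟩
      · intro h
        rw [Sym2.eq_iff] at h
        rcases h with ⟨h, -⟩ | ⟨h, -⟩
        · rw [Sum.inl.injEq, Fin.mk.injEq] at h
          exact succ_ne_pred hn p.isLt h
        · cases h
      · simp only [ed_mk, dist_ll hn, dist_lr hn, Fin.val_mk]; omega
      · simp only [ed_mk, dist_ll hn, dist_lr hn, Fin.val_mk]; omega

lemma noTwo_rr (hn : 3 ≤ n) (p q : Fin n) : Fails n (.inr p) (.inr q) := by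
  have h1 : (1:ℕ) ≤ n := by omega
  have f0 : cdv n p.val p.val = 0 := cdv_self p.isLt
  have f1 : cdv n p.val ((p.val+1) % n) = 1 := cdv_succ_self hn p.isLt
  have f2 : cdv n p.val ((p.val+n-1) % n) = 1 := cdv_pred_self hn p.isLt
  by_cases hA : cdv n q.val p.val ≤ cdv n q.val ((p.val+1) % n)
  · refine ⟨s(.inl p, .inr p), s(.inr p, .inr (⟨(p.val+1) % n, succ_mod_lt p.isLt⟩ : Fin n)),
      (SimpleGraph.mem_edgeSet _).mpr (adj_lr.mpr rfl),
      (SimpleGraph.mem_edgeSet _).mpr ((adj_rr hn).mpr (Or.inl rfl)), ?_, ?_, ?_⟩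
    · simp [Sym2.eq_iff]
    · simp only [ed_mk, dist_rl hn, dist_rr hn, Fin.val_mk]; omega
    · simp only [ed_mk, dist_rl hn, dist_rr hn, Fin.val_mk]; omega
  · by_cases hB : cdv n q.val p.val ≤ cdv n q.val ((p.val+n-1) % n)
    · refine ⟨s(.inl p, .inr p), s(.inr (⟨(p.val+n-1) % n, pred_mod_lt h1 p.isLt⟩ : Fin n), .inr p),
        (SimpleGraph.mem_edgeSet _).mpr (adj_lr.mpr rfl),
        (SimpleGraph.mem_edgeSet _).mpr ((adj_rr hn).mpr (Or.inl (pred_succ h1 p.isLt).symm)),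
        ?_, ?_, ?_⟩
      · simp [Sym2.eq_iff]
      · simp only [ed_mk, dist_rl hn, dist_rr hn, Fin.val_mk]; omega
      · simp only [ed_mk, dist_rl hn, dist_rr hn, Fin.val_mk]; omega
    · have lip1 : cdv n q.val p.val ≤ cdv n q.val ((p.val+1) % n) + 1 :=
        cdv_lip_succ q.isLt p.isLt
      have lip0 : cdv n q.val p.val ≤ cdv n q.val ((p.val+n-1) % n) + 1 :=
        cdv_lip_pred h1 q.isLt p.isLt
      refine ⟨s(.inl (⟨(p.val+1) % n, succ_mod_lt p.isLt⟩ : Fin n), .inr (⟨(p.val+1) % n, succ_mod_lt p.isLt⟩ : Fin n)), s(.inl (⟨(p.val+n-1) % n, pred_mod_lt h1 p.isLt⟩ : Fin n), .inr (⟨(p.val+n-1) % n, pred_mod_lt h1 p.isLt⟩ : Fin n)),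
        (SimpleGraph.mem_edgeSet _).mpr (adj_lr.mpr rfl),
        (SimpleGraph.mem_edgeSet _).mpr (adj_lr.mpr rfl), ?_, ?_, ?_⟩
      · intro h
        rw [Sym2.eq_iff] at h
        rcases h with ⟨h, -⟩ | ⟨h, -⟩
        · rw [Sum.inl.injEq, Fin.mk.injEq] at h
          exact succ_ne_pred hn p.isLt h
        · cases h
      · simp only [ed_mk, dist_rl hn, dist_rr hn, Fin.val_mk]; omega
      · simp only [ed_mk, dist_rl hn, dist_rr hn, Fin.val_mk]; omega

lemma noTwo_lr (hn : 3 ≤ n) (p q : Fin n) : Fails n (.inl p) (.inr q) := by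
  have h1 : (1:ℕ) ≤ n := by omega
  have f0 : cdv n p.val p.val = 0 := cdv_self p.isLt
  have f1 : cdv n p.val ((p.val+1) % n) = 1 := cdv_succ_self hn p.isLt
  have f2 : cdv n p.val ((p.val+n-1) % n) = 1 := cdv_pred_self hn p.isLt
  by_cases hpq : q = p
  · subst hpq
    refine ⟨s(.inl q, .inl (⟨(q.val+1) % n, succ_mod_lt q.isLt⟩ : Fin n)), s(.inl (⟨(q.val+n-1) % n, pred_mod_lt h1 q.isLt⟩ : Fin n), .inl q),
      (SimpleGraph.mem_edgeSet _).mpr ((adj_ll hn).mpr (Or.inl rfl)),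
      (SimpleGraph.mem_edgeSet _).mpr ((adj_ll hn).mpr (Or.inl (pred_succ h1 q.isLt).symm)),
      ?_, ?_, ?_⟩
    · intro h
      rw [Sym2.eq_iff] at h
      rcases h with ⟨h, -⟩ | ⟨-, h⟩
      · rw [Sum.inl.injEq] at h
        exact pred_ne (by omega) q.isLt ((Fin.ext_iff.mp h).symm)
      · rw [Sum.inl.injEq, Fin.mk.injEq] at h
        exact succ_ne_pred hn q.isLt h
    · simp only [ed_mk, dist_ll hn, Fin.val_mk]; omega
    · simp only [ed_mk, dist_rl hn, Fin.val_mk]; omega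
  · have hqp : q.val ≠ p.val := fun h => hpq (Fin.ext h)
    have hc : 0 < cdv n q.val p.val := by
      have := cdv_eq_zero q.isLt p.isLt
      omega
    rcases cdv_dec q.isLt p.isLt hc with hd | hd
    · refine ⟨s(.inl p, .inr p), s(.inl p, .inl (⟨(p.val+1) % n, succ_mod_lt p.isLt⟩ : Fin n)),
        (SimpleGraph.mem_edgeSet _).mpr (adj_lr.mpr rfl),
        (SimpleGraph.mem_edgeSet _).mpr ((adj_ll hn).mpr (Or.inl rfl)), ?_, ?_, ?_⟩
      · simp [Sym2.eq_iff]
      · simp only [ed_mk, dist_ll hn, dist_lr hn, Fin.val_mk]; omega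
      · simp only [ed_mk, dist_rl hn, dist_rr hn, Fin.val_mk]; omega
    · refine ⟨s(.inl p, .inr p), s(.inl (⟨(p.val+n-1) % n, pred_mod_lt h1 p.isLt⟩ : Fin n), .inl p),
        (SimpleGraph.mem_edgeSet _).mpr (adj_lr.mpr rfl),
        (SimpleGraph.mem_edgeSet _).mpr ((adj_ll hn).mpr (Or.inl (pred_succ h1 p.isLt).symm)),
        ?_, ?_, ?_⟩
      · simp [Sym2.eq_iff]
      · simp only [ed_mk, dist_ll hn, dist_lr hn, Fin.val_mk]; omega
      · simp only [ed_mk, dist_rl hn, dist_rr hn, Fin.val_mk]; omega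

lemma no_two (hn : 3 ≤ n) (a b : Fin n ⊕ Fin n) : Fails n a b := by
  rcases a with p | p <;> rcases b with q | q
  · exact noTwo_ll hn p q
  · exact noTwo_lr hn p q
  · exact (noTwo_lr hn q p).symm
  · exact noTwo_rr hn p q

lemma small {α : Type*} (S : Set α) (hfin : S.Finite) (h : S.ncard ≤ 2) (d : α) :
    ∃ a b, S ⊆ {a, b} := by
  rcases S.eq_empty_or_nonempty with rfl | ⟨a, ha⟩
  · exact ⟨d, d, by simp⟩
  by_cases hb : ∃ b ∈ S, b ≠ a
  · obtain ⟨b, hbS, hba⟩ := hb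
    refine ⟨a, b, fun c hc => ?_⟩
    by_contra hcn
    simp only [Set.mem_insert_iff, Set.mem_singleton_iff] at hcn
    push_neg at hcn
    have hsub : ({a, b, c} : Set α) ⊆ S := by
      intro x hx
      simp only [Set.mem_insert_iff, Set.mem_singleton_iff] at hx
      rcases hx with rfl | rfl | rfl <;> assumption
    have h3 : ({a, b, c} : Set α).ncard = 3 := by
      rw [Set.ncard_insert_of_notMem (by simp [Ne.symm hba, Ne.symm hcn.1]),
        Set.ncard_pair (Ne.symm hcn.2)]
    have := Set.ncard_le_ncard hsub hfin
    omega
  · push_neg at hb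
    exact ⟨a, a, fun c hc => by simp [hb c hc]⟩

end GPaux

/-- For every `n ≥ 3`, `β_E(GP(n,1)) = 3`. -/
theorem stmt4 (n : ℕ) (hn : 3 ≤ n) : edgeMetricDim (GP n 1) = 3 := by
  have h3 : 3 ∈ {m | ∃ S : Set (Fin n ⊕ Fin n),
      S.Finite ∧ S.ncard = m ∧ IsEdgeGenerator (GP n 1) S} := by
    refine ⟨{.inl ⟨0, by omega⟩, .inl ⟨1, by omega⟩, .inr ⟨0, by omega⟩},
      Set.toFinite _, ?_, GPaux.gen hn⟩
    rw [Set.ncard_insert_of_notMem (by simp [Fin.ext_iff]),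
      Set.ncard_insert_of_notMem (by simp [Fin.ext_iff]), Set.ncard_singleton]
  have hlb : ∀ m ∈ {m | ∃ S : Set (Fin n ⊕ Fin n),
      S.Finite ∧ S.ncard = m ∧ IsEdgeGenerator (GP n 1) S}, 3 ≤ m := by
    rintro m ⟨S, hfin, rfl, hgen⟩
    by_contra hlt
    obtain ⟨a, b, hsub⟩ := GPaux.small S hfin (by omega) (.inl ⟨0, by omega⟩)
    obtain ⟨e₁, e₂, m₁, m₂, hne, ha, hb⟩ := GPaux.no_two hn a b
    refine hne (hgen e₁ m₁ e₂ m₂ fun w hw => ?_)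
    rcases hsub hw with h | h
    · subst h; exact ha
    · rw [Set.mem_singleton_iff] at h; subst h; exact hb
  exact le_antisymm (Nat.sInf_le h3) (le_csInf ⟨3, h3⟩ hlb)
end

section
/- For even n = 2t (t ≥ 2), the edge metric dimension of GP(n,1) equals its metric dimension, both being 3; for odd n = 2t+1 (t ≥ 1), β_E(GP(n,1)) = 3 > β(GP(n,1)) = 2. -/
open SimpleGraph

open Fin.NatCast Fin.CommRing

namespace Prism

def mkV (n : ℕ) (s : Bool) (i : Fin n) : Fin n ⊕ Fin n := cond s (Sum.inr i) (Sum.inl i)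

lemma mkV_inj {n : ℕ} {s t : Bool} {i j : Fin n} (h : mkV n s i = mkV n t j) : s = t ∧ i = j := by
  cases s <;> cases t <;> simp [mkV] at h ⊢ <;> tauto

lemma mkV_ne {n : ℕ} {s t : Bool} {i j : Fin n} (h : s ≠ t) : mkV n s i ≠ mkV n t j :=
  fun hh => h (mkV_inj hh).1

lemma mkV_ne' {n : ℕ} {s t : Bool} {i j : Fin n} (h : i ≠ j) : mkV n s i ≠ mkV n t j :=
  fun hh => h (mkV_inj hh).2

lemma exists_mkV {n : ℕ} (v : Fin n ⊕ Fin n) : ∃ s i, v = mkV n s i := by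
  rcases v with i | i
  · exact ⟨false, i, rfl⟩
  · exact ⟨true, i, rfl⟩

variable {n : ℕ} [NeZero n]

lemma val_add_one (hn : 3 ≤ n) (i : Fin n) : ((i + 1 : Fin n) : ℕ) = ((i : ℕ) + 1) % n := by
  rw [Fin.add_def]
  show ((i : ℕ) + 1 % n) % n = _
  rw [Nat.add_mod_mod]

lemma ne_add_one (hn : 3 ≤ n) (a : Fin n) : a ≠ a + 1 := by
  intro h
  have := congrArg Fin.val h
  rw [val_add_one hn a] at this
  have h1 : (a : ℕ) < n := a.isLt
  rcases Nat.lt_or_ge ((a : ℕ) + 1) n with h' | h'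
  · rw [Nat.mod_eq_of_lt h'] at this; omega
  · have h2 : (a:ℕ) + 1 = n := by omega
    rw [h2, Nat.mod_self] at this; omega

lemma adj_iff (hn : 3 ≤ n) (s t : Bool) (i j : Fin n) :
    (GP n 1).Adj (mkV n s i) (mkV n t j) ↔
      (s = t ∧ (j = i + 1 ∨ i = j + 1)) ∨ (s ≠ t ∧ i = j) := by
  have key : ∀ a b : Fin n, ((b : ℕ) = ((a : ℕ) + 1) % n) ↔ b = a + 1 := by
    intro a b
    rw [← val_add_one hn a, Fin.val_eq_val]
  cases s <;> cases t <;>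
      simp only [GP, mkV, cond, fromRel_adj, ne_eq, Sum.inl.injEq, Sum.inr.injEq,
        reduceCtorEq, key, not_false_iff, false_and, and_false, false_or, or_false,
        Bool.false_eq_true, Bool.true_eq_false, true_and, not_true, not_false_eq_true,
        and_true, false_iff, true_iff, iff_true, iff_false]
  · exact ⟨fun h => h.2, fun h => ⟨by rintro rfl; rcases h with h|h <;> exact ne_add_one hn _ h, h⟩⟩
  · exact eq_comm
  · exact ⟨fun h => h.2, fun h => ⟨by rintro rfl; rcases h with h|h <;> exact ne_add_one hn _ h, h⟩⟩

end Prism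

namespace Prism
variable {n : ℕ} [NeZero n]

def cyc (n : ℕ) (d : Fin n) : ℕ := min d.val (n - d.val)

lemma mod_cases (x : ℕ) (hn : 0 < n) (hx : x < 2 * n) :
    x % n = x ∧ x < n ∨ x % n = x - n ∧ n ≤ x := by
  rcases Nat.lt_or_ge x n with h | h
  · exact Or.inl ⟨Nat.mod_eq_of_lt h, h⟩
  · exact Or.inr ⟨by rw [Nat.mod_eq_sub_mod h, Nat.mod_eq_of_lt (by omega)], h⟩

lemma val_sub_eq (a b : Fin n) :
    (a - b).val = if b.val ≤ a.val then a.val - b.val else n - (b.val - a.val) := by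
  have ha := a.isLt
  have hb := b.isLt
  rw [Fin.sub_def]
  show (n - b.val + a.val) % n = _
  rcases mod_cases (n := n) (n - b.val + a.val) (by omega) (by omega) with ⟨h1, h2⟩ | ⟨h1, h2⟩ <;>
    rw [h1] <;> split_ifs <;> omega

lemma val_one (hn : 3 ≤ n) : ((1 : Fin n) : ℕ) = 1 := by
  show 1 % n = 1
  exact Nat.mod_eq_of_lt (by omega)

lemma cyc_sub_eq (a b : Fin n) :
    cyc n (a - b) = if a.val ≤ b.val then min (b.val - a.val) (n - (b.val - a.val))
      else min (a.val - b.val) (n - (a.val - b.val)) := by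
  have ha := a.isLt
  have hb := b.isLt
  rw [cyc, val_sub_eq]
  split_ifs <;> omega

lemma cyc_sub_comm (a b : Fin n) : cyc n (a - b) = cyc n (b - a) := by
  have ha := a.isLt
  have hb := b.isLt
  rw [cyc_sub_eq, cyc_sub_eq]
  split_ifs <;> omega

lemma val_add_one' (hn : 3 ≤ n) (i : Fin n) :
    ((i + 1 : Fin n) : ℕ) = if (i : ℕ) + 1 < n then (i : ℕ) + 1 else 0 := by
  have ha := i.isLt
  rw [val_add_one hn]
  rcases mod_cases (n := n) ((i:ℕ) + 1) (by omega) (by omega) with ⟨h1, h2⟩ | ⟨h1, h2⟩ <;>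
    rw [h1] <;> split_ifs <;> omega

lemma val_sub_one (hn : 3 ≤ n) (i : Fin n) :
    ((i - 1 : Fin n) : ℕ) = if (i : ℕ) = 0 then n - 1 else (i : ℕ) - 1 := by
  have ha := i.isLt
  rw [val_sub_eq, val_one hn]
  split_ifs <;> omega

lemma cyc_le_add_one (hn : 3 ≤ n) (d : Fin n) : cyc n d ≤ cyc n (d + 1) + 1 := by
  have ha := d.isLt
  have h2 := val_add_one' hn d
  have h3 := (d + 1).isLt
  unfold cyc
  split_ifs at h2 <;> rw [h2] <;> omega

lemma cyc_le_sub_one (hn : 3 ≤ n) (d : Fin n) : cyc n d ≤ cyc n (d - 1) + 1 := by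
  have ha := d.isLt
  have h2 := val_sub_one hn d
  have h3 := (d - 1).isLt
  unfold cyc
  split_ifs at h2 <;> rw [h2] <;> omega

def side {n : ℕ} : Fin n ⊕ Fin n → Bool := Sum.elim (fun _ => false) (fun _ => true)
def idx {n : ℕ} : Fin n ⊕ Fin n → Fin n := Sum.elim id id

@[simp] lemma side_mkV (s : Bool) (i : Fin n) : side (mkV n s i) = s := by cases s <;> rfl
@[simp] lemma idx_mkV (s : Bool) (i : Fin n) : idx (mkV n s i) = i := by cases s <;> rfl

def sd (s t : Bool) : ℕ := if s = t then 0 else 1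

lemma walk_lower (hn : 3 ≤ n) (y x : Fin n ⊕ Fin n) (p : (GP n 1).Walk x y) :
    cyc n (idx y - idx x) + sd (side x) (side y) ≤ p.length := by
  induction p with
  | nil => simp [cyc, sd]
  | @cons a b c hadj p ih =>
    obtain ⟨s, i, rfl⟩ := exists_mkV a
    obtain ⟨s', i', rfl⟩ := exists_mkV b
    rw [adj_iff hn] at hadj
    rw [Walk.length_cons]
    simp only [side_mkV, idx_mkV] at *
    rcases hadj with ⟨rfl, h | h⟩ | ⟨hne, rfl⟩
    · subst h
      have h1 : idx c - i - 1 = idx c - (i + 1) := by ring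
      have h2 := cyc_le_sub_one hn (idx c - i)
      rw [h1] at h2
      omega
    · subst h
      have h1 : idx c - i' - 1 + 1 = idx c - i' := by ring
      have h2 := cyc_le_add_one hn (idx c - i' - 1)
      rw [h1] at h2
      have h3 : idx c - (i' + 1) = idx c - i' - 1 := by ring
      rw [h3]
      omega
    · have hsd : sd s (side c) ≤ sd s' (side c) + 1 := by
        unfold sd
        split_ifs <;> omega
      omega

lemma walk_ring (hn : 3 ≤ n) (s : Bool) (i : Fin n) (k : ℕ) :
    ∃ p : (GP n 1).Walk (mkV n s i) (mkV n s (i + (k : Fin n))), p.length = k := by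
  induction k with
  | zero =>
    exact ⟨Walk.nil.copy rfl (congrArg (mkV n s) (by push_cast; ring)), by simp⟩
  | succ m ih =>
    obtain ⟨p, hp⟩ := ih
    have hadj : (GP n 1).Adj (mkV n s (i + (m : Fin n))) (mkV n s (i + ((m+1 : ℕ) : Fin n))) := by
      rw [adj_iff hn]
      exact Or.inl ⟨rfl, Or.inl (by push_cast; ring)⟩
    exact ⟨p.concat hadj, by rw [Walk.length_concat, hp]⟩

lemma walk_ring_neg (hn : 3 ≤ n) (s : Bool) (i : Fin n) (k : ℕ) :
    ∃ p : (GP n 1).Walk (mkV n s i) (mkV n s (i - (k : Fin n))), p.length = k := by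
  induction k with
  | zero =>
    exact ⟨Walk.nil.copy rfl (congrArg (mkV n s) (by push_cast; ring)), by simp⟩
  | succ m ih =>
    obtain ⟨p, hp⟩ := ih
    have hadj : (GP n 1).Adj (mkV n s (i - (m : Fin n))) (mkV n s (i - ((m+1 : ℕ) : Fin n))) := by
      rw [adj_iff hn]
      exact Or.inl ⟨rfl, Or.inr (by push_cast; ring)⟩
    exact ⟨p.concat hadj, by rw [Walk.length_concat, hp]⟩

lemma walk_to (hn : 3 ≤ n) (s t : Bool) (i j : Fin n) :
    ∃ p : (GP n 1).Walk (mkV n s i) (mkV n t j), p.length = cyc n (j - i) + sd s t := by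
  have key : ∀ u : Bool, ∃ p : (GP n 1).Walk (mkV n u i) (mkV n u j), p.length = cyc n (j - i) := by
    intro u
    rcases Nat.le_total ((j - i : Fin n) : ℕ) (n - ((j - i : Fin n) : ℕ)) with h | h
    · obtain ⟨p, hp⟩ := walk_ring hn u i ((j - i : Fin n) : ℕ)
      refine ⟨p.copy rfl (congrArg (mkV n u) (by rw [Fin.cast_val_eq_self]; ring)), ?_⟩
      rw [Walk.length_copy, hp, cyc, min_eq_left h]
    · obtain ⟨p, hp⟩ := walk_ring_neg hn u i ((i - j : Fin n) : ℕ)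
      refine ⟨p.copy rfl (congrArg (mkV n u) (by rw [Fin.cast_val_eq_self]; ring)), ?_⟩
      rw [Walk.length_copy, hp, cyc, min_eq_right h]
      have h1 := val_sub_eq i j
      have h2 := val_sub_eq j i
      have := i.isLt; have := j.isLt
      split_ifs at h1 h2 <;> omega
  by_cases hst : s = t
  · subst hst
    obtain ⟨p, hp⟩ := key s
    exact ⟨p, by rw [hp, sd, if_pos rfl, Nat.add_zero]⟩
  · obtain ⟨p, hp⟩ := key s
    have hadj : (GP n 1).Adj (mkV n s j) (mkV n t j) := by
      rw [adj_iff hn]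
      exact Or.inr ⟨hst, rfl⟩
    exact ⟨p.concat hadj, by rw [Walk.length_concat, hp, sd, if_neg hst]⟩

theorem dist_eq (hn : 3 ≤ n) (s t : Bool) (i j : Fin n) :
    (GP n 1).dist (mkV n s i) (mkV n t j) = cyc n (j - i) + sd s t := by
  obtain ⟨p, hp⟩ := walk_to hn s t i j
  refine le_antisymm (hp ▸ SimpleGraph.dist_le p) ?_
  obtain ⟨q, hq⟩ := Reachable.exists_walk_length_eq_dist ⟨p⟩
  calc cyc n (j - i) + sd s t
      = cyc n (idx (mkV n t j) - idx (mkV n s i)) + sd (side (mkV n s i)) (side (mkV n t j)) := by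
        simp
    _ ≤ q.length := walk_lower hn _ _ q
    _ = _ := hq

end Prism

namespace Prism
variable {n : ℕ} [NeZero n]

def ringE (n : ℕ) [NeZero n] (s : Bool) (i : Fin n) : Sym2 (Fin n ⊕ Fin n) :=
  s(mkV n s i, mkV n s (i+1))
def spokeE (n : ℕ) (i : Fin n) : Sym2 (Fin n ⊕ Fin n) := s(mkV n false i, mkV n true i)

lemma ringE_mem (hn : 3 ≤ n) (s : Bool) (i : Fin n) : ringE n s i ∈ (GP n 1).edgeSet := by
  rw [ringE, SimpleGraph.mem_edgeSet, adj_iff hn]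
  exact Or.inl ⟨rfl, Or.inl rfl⟩

lemma spokeE_mem (hn : 3 ≤ n) (i : Fin n) : spokeE n i ∈ (GP n 1).edgeSet := by
  rw [spokeE, SimpleGraph.mem_edgeSet, adj_iff hn]
  exact Or.inr ⟨by simp, rfl⟩

lemma edge_cases (hn : 3 ≤ n) (e : Sym2 (Fin n ⊕ Fin n)) (he : e ∈ (GP n 1).edgeSet) :
    (∃ s i, e = ringE n s i) ∨ (∃ i, e = spokeE n i) := by
  induction e with
  | _ x y =>
    rw [SimpleGraph.mem_edgeSet] at he
    obtain ⟨s, i, rfl⟩ := exists_mkV x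
    obtain ⟨t, j, rfl⟩ := exists_mkV y
    rw [adj_iff hn] at he
    rcases he with ⟨rfl, h | h⟩ | ⟨hst, rfl⟩
    · exact Or.inl ⟨s, i, by rw [ringE, h]⟩
    · exact Or.inl ⟨s, j, by rw [ringE, h, Sym2.eq_swap]⟩
    · cases s
      · cases t
        · simp at hst
        · exact Or.inr ⟨i, rfl⟩
      · cases t
        · exact Or.inr ⟨i, Sym2.eq_swap⟩
        · simp at hst

lemma edgeDist_eq {V : Type*} (G : SimpleGraph V) (w x y : V) :
    edgeDist G w s(x, y) = min (G.dist w x) (G.dist w y) := rfl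

lemma edgeDist_ringE (hn : 3 ≤ n) (t : Bool) (j : Fin n) (s : Bool) (i : Fin n) :
    edgeDist (GP n 1) (mkV n t j) (ringE n s i)
      = min (cyc n (i - j)) (cyc n (i + 1 - j)) + sd t s := by
  rw [ringE, edgeDist_eq, dist_eq hn, dist_eq hn]
  exact Nat.add_min_add_right _ _ _

lemma edgeDist_spokeE (hn : 3 ≤ n) (t : Bool) (j : Fin n) (i : Fin n) :
    edgeDist (GP n 1) (mkV n t j) (spokeE n i) = cyc n (i - j) := by
  rw [spokeE, edgeDist_eq, dist_eq hn, dist_eq hn]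
  cases t <;> simp [sd]

lemma ringE_ne_spokeE (s : Bool) (i j : Fin n) : ringE n s i ≠ spokeE n j := by
  rw [ringE, spokeE]
  intro h
  rw [Sym2.eq_iff] at h
  revert h
  rintro (⟨h1, h2⟩ | ⟨h1, h2⟩) <;> cases s
  · exact Bool.noConfusion (mkV_inj h2).1
  · exact Bool.noConfusion (mkV_inj h1).1
  · exact Bool.noConfusion (mkV_inj h1).1
  · exact Bool.noConfusion (mkV_inj h2).1

lemma one_lt_ne (hn : 3 ≤ n) (i : Fin n) : i + 1 ≠ i - 1 := by
  intro h
  have h1 := val_add_one' hn i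
  have h2 := val_sub_one hn i
  rw [h] at h1
  have := i.isLt
  split_ifs at h1 h2 <;> omega

lemma ringE_ne_pred (hn : 3 ≤ n) (s : Bool) (i : Fin n) : ringE n s i ≠ ringE n s (i - 1) := by
  rw [ringE, ringE]
  intro h
  rw [Sym2.eq_iff] at h
  revert h
  rintro (⟨h1, h2⟩ | ⟨h1, h2⟩)
  · have hv := congrArg Fin.val (mkV_inj h1).2
    rw [val_sub_one hn] at hv
    have := i.isLt
    split_ifs at hv <;> omega
  · exact one_lt_ne hn i (mkV_inj h2).2

end Prism

namespace Prism
variable {n : ℕ} [NeZero n]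

@[simp] lemma sd_self (s : Bool) : sd s s = 0 := by simp [sd]
@[simp] lemma sd_not (s : Bool) : sd s (!s) = 1 := by cases s <;> rfl
@[simp] lemma sd_not' (s : Bool) : sd (!s) s = 1 := by cases s <;> rfl
@[simp] lemma cyc_zero : cyc n 0 = 0 := by simp [cyc]
lemma cyc_one (hn : 3 ≤ n) : cyc n 1 = 1 := by
  rw [cyc, val_one hn]; omega
lemma cyc_neg (d : Fin n) : cyc n (0 - d) = cyc n d := by
  rw [cyc_sub_comm, sub_zero]

lemma not_bool (s t : Bool) (h : s ≠ t) : t = !s := by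
  cases s <;> cases t <;> simp_all

lemma vertex_collision_even (hn : 3 ≤ n) (hev : n % 2 = 0) (s t : Bool) (a b : Fin n) :
    ∃ x y : Fin n ⊕ Fin n, x ≠ y ∧
      (GP n 1).dist (mkV n s a) x = (GP n 1).dist (mkV n s a) y ∧
      (GP n 1).dist (mkV n t b) x = (GP n 1).dist (mkV n t b) y := by
  set q := b - a with hq
  have hQ := q.isLt
  by_cases hst : s = t
  · subst hst
    obtain h | h | h : 2 * q.val + 2 ≤ n ∨ 2 * q.val = n ∨ n + 2 ≤ 2 * q.val := by omega
    · refine ⟨mkV n s (b + 1), mkV n (!s) b, mkV_ne (by simp), ?_, ?_⟩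
      · rw [dist_eq hn, dist_eq hn, sd_self, sd_not,
          show b + 1 - a = q + 1 by rw [hq]; ring, show b - a = q from hq.symm]
        have e1 := val_add_one' hn q
        rw [cyc, cyc]
        split_ifs at e1 <;> rw [e1] <;> omega
      · rw [dist_eq hn, dist_eq hn, sd_self, sd_not,
          show b + 1 - b = 1 by ring, show b - b = 0 by ring, cyc_one hn, cyc_zero]
    · refine ⟨mkV n s (a + 1), mkV n s (a - 1), (mkV_ne' (one_lt_ne hn a)), ?_, ?_⟩
      · rw [dist_eq hn, dist_eq hn, show a + 1 - a = 1 by ring,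
          show a - 1 - a = 0 - 1 by ring, cyc_neg]
      · rw [dist_eq hn, dist_eq hn, show a + 1 - b = 0 - (q - 1) by rw [hq]; ring,
          show a - 1 - b = 0 - (q + 1) by rw [hq]; ring, cyc_neg, cyc_neg]
        have e1 := val_add_one' hn q
        have e2 := val_sub_one hn q
        rw [cyc, cyc]
        split_ifs at e1 e2 <;> rw [e1, e2] <;> omega
    · refine ⟨mkV n s (b - 1), mkV n (!s) b, mkV_ne (by simp), ?_, ?_⟩
      · rw [dist_eq hn, dist_eq hn, sd_self, sd_not,
          show b - 1 - a = q - 1 by rw [hq]; ring, show b - a = q from hq.symm]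
        have e2 := val_sub_one hn q
        rw [cyc, cyc]
        split_ifs at e2 <;> rw [e2] <;> omega
      · rw [dist_eq hn, dist_eq hn, sd_self, sd_not,
          show b - 1 - b = 0 - 1 by ring, show b - b = 0 by ring, cyc_neg, cyc_one hn, cyc_zero]
  · have ht : t = !s := not_bool _ _ hst
    subst ht
    obtain h | h | h : q.val = 0 ∨ (1 ≤ q.val ∧ 2 * q.val ≤ n) ∨ n ≤ 2 * q.val := by omega
    · have hq0 : q = 0 := by
        apply Fin.ext; rw [h]; rfl
      have hba : b = a := by
        have : b - a = 0 := by rw [← hq, hq0]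
        rwa [sub_eq_zero] at this
      subst hba
      refine ⟨mkV n s (b + 1), mkV n s (b - 1), mkV_ne' (one_lt_ne hn b), ?_, ?_⟩
      · rw [dist_eq hn, dist_eq hn, show b + 1 - b = 1 by ring,
          show b - 1 - b = 0 - 1 by ring, cyc_neg]
      · rw [dist_eq hn, dist_eq hn, show b + 1 - b = 1 by ring,
          show b - 1 - b = 0 - 1 by ring, cyc_neg]
    · refine ⟨mkV n s (a + 1), mkV n (!s) a, mkV_ne (by simp), ?_, ?_⟩
      · rw [dist_eq hn, dist_eq hn, sd_self, sd_not,
          show a + 1 - a = 1 by ring, show a - a = 0 by ring, cyc_one hn, cyc_zero]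
      · rw [dist_eq hn, dist_eq hn, sd_not', sd_self,
          show a + 1 - b = 0 - (q - 1) by rw [hq]; ring,
          show a - b = 0 - q by rw [hq]; ring, cyc_neg, cyc_neg]
        have e2 := val_sub_one hn q
        rw [cyc, cyc]
        split_ifs at e2 <;> rw [e2] <;> omega
    · refine ⟨mkV n s (a - 1), mkV n (!s) a, mkV_ne (by simp), ?_, ?_⟩
      · rw [dist_eq hn, dist_eq hn, sd_self, sd_not,
          show a - 1 - a = 0 - 1 by ring, show a - a = 0 by ring, cyc_neg, cyc_one hn, cyc_zero]
      · rw [dist_eq hn, dist_eq hn, sd_not', sd_self,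
          show a - 1 - b = 0 - (q + 1) by rw [hq]; ring,
          show a - b = 0 - q by rw [hq]; ring, cyc_neg, cyc_neg]
        have e1 := val_add_one' hn q
        rw [cyc, cyc]
        split_ifs at e1 <;> rw [e1] <;> omega

lemma vertex_collision_single (hn : 3 ≤ n) (s : Bool) (a : Fin n) :
    ∃ x y : Fin n ⊕ Fin n, x ≠ y ∧
      (GP n 1).dist (mkV n s a) x = (GP n 1).dist (mkV n s a) y := by
  refine ⟨mkV n s (a + 1), mkV n s (a - 1), mkV_ne' (one_lt_ne hn a), ?_⟩
  rw [dist_eq hn, dist_eq hn, show a + 1 - a = 1 by ring, show a - 1 - a = 0 - 1 by ring, cyc_neg]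

lemma edge_collision (hn : 3 ≤ n) (s t : Bool) (a b : Fin n) :
    ∃ e₁ ∈ (GP n 1).edgeSet, ∃ e₂ ∈ (GP n 1).edgeSet, e₁ ≠ e₂ ∧
      edgeDist (GP n 1) (mkV n s a) e₁ = edgeDist (GP n 1) (mkV n s a) e₂ ∧
      edgeDist (GP n 1) (mkV n t b) e₁ = edgeDist (GP n 1) (mkV n t b) e₂ := by
  set q := b - a with hq
  have hQ := q.isLt
  have hw1r : ∀ u : Bool, edgeDist (GP n 1) (mkV n u a) (ringE n u a) = 0 := by
    intro u
    rw [edgeDist_ringE hn, sd_self, show a - a = 0 by ring, show a + 1 - a = 1 by ring]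
    simp [cyc_neg, cyc_zero, cyc_one hn]
  have hw1r' : ∀ u : Bool, edgeDist (GP n 1) (mkV n u a) (ringE n u (a - 1)) = 0 := by
    intro u
    rw [edgeDist_ringE hn, sd_self, show a - 1 - a = 0 - 1 by ring,
      show a - 1 + 1 - a = 0 by ring]
    simp [cyc_neg, cyc_zero, cyc_one hn]
  have hw1s : ∀ u : Bool, edgeDist (GP n 1) (mkV n u a) (spokeE n a) = 0 := by
    intro u
    rw [edgeDist_spokeE hn, show a - a = 0 by ring, cyc_zero]
  by_cases hst : s = t
  · subst hst
    obtain h | h | h : 2 * q.val + 1 ≤ n ∨ 2 * q.val = n ∨ n + 1 ≤ 2 * q.val := by omega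
    · refine ⟨spokeE n a, spokeE_mem hn a, ringE n s (a - 1), ringE_mem hn s (a - 1),
        (ringE_ne_spokeE s (a - 1) a).symm, by rw [hw1s, hw1r'], ?_⟩
      rw [edgeDist_spokeE hn, edgeDist_ringE hn, sd_self,
        show a - b = 0 - q by rw [hq]; ring, show a - 1 - b = 0 - (q + 1) by rw [hq]; ring,
        show a - 1 + 1 - b = 0 - q by rw [hq]; ring]
      simp only [cyc_neg]
      have e1 := val_add_one' hn q
      rw [cyc, cyc]
      split_ifs at e1 <;> rw [e1] <;> omega
    · refine ⟨ringE n s a, ringE_mem hn s a, ringE n s (a - 1), ringE_mem hn s (a - 1),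
        ringE_ne_pred hn s a, by rw [hw1r, hw1r'], ?_⟩
      rw [edgeDist_ringE hn, edgeDist_ringE hn, sd_self,
        show a - b = 0 - q by rw [hq]; ring, show a + 1 - b = 0 - (q - 1) by rw [hq]; ring,
        show a - 1 - b = 0 - (q + 1) by rw [hq]; ring,
        show a - 1 + 1 - b = 0 - q by rw [hq]; ring]
      simp only [cyc_neg]
      have e1 := val_add_one' hn q
      have e2 := val_sub_one hn q
      rw [cyc, cyc, cyc]
      split_ifs at e1 e2 <;> rw [e1, e2] <;> omega
    · refine ⟨spokeE n a, spokeE_mem hn a, ringE n s a, ringE_mem hn s a,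
        (ringE_ne_spokeE s a a).symm, by rw [hw1s, hw1r], ?_⟩
      rw [edgeDist_spokeE hn, edgeDist_ringE hn, sd_self,
        show a - b = 0 - q by rw [hq]; ring, show a + 1 - b = 0 - (q - 1) by rw [hq]; ring]
      simp only [cyc_neg]
      have e2 := val_sub_one hn q
      rw [cyc, cyc]
      split_ifs at e2 <;> rw [e2] <;> omega
  · have ht : t = !s := not_bool _ _ hst
    subst ht
    obtain h | h | h : q.val = 0 ∨ (1 ≤ q.val ∧ 2 * q.val ≤ n) ∨ n + 1 ≤ 2 * q.val := by omega
    · have hba : b = a := by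
        have h0 : q = 0 := by apply Fin.ext; rw [h]; rfl
        have : b - a = 0 := by rw [← hq, h0]
        rwa [sub_eq_zero] at this
      subst hba
      refine ⟨ringE n s b, ringE_mem hn s b, ringE n s (b - 1), ringE_mem hn s (b - 1),
        ringE_ne_pred hn s b, by rw [hw1r, hw1r'], ?_⟩
      rw [edgeDist_ringE hn, edgeDist_ringE hn, sd_not',
        show b - b = 0 by ring, show b + 1 - b = 1 by ring,
        show b - 1 - b = 0 - 1 by ring, show b - 1 + 1 - b = 0 by ring]
      simp [cyc_neg, cyc_zero, cyc_one hn]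
    · refine ⟨ringE n s a, ringE_mem hn s a, spokeE n a, spokeE_mem hn a,
        ringE_ne_spokeE s a a, by rw [hw1r, hw1s], ?_⟩
      rw [edgeDist_spokeE hn, edgeDist_ringE hn, sd_not',
        show a - b = 0 - q by rw [hq]; ring, show a + 1 - b = 0 - (q - 1) by rw [hq]; ring]
      simp only [cyc_neg]
      have e2 := val_sub_one hn q
      rw [cyc, cyc]
      split_ifs at e2 <;> rw [e2] <;> omega
    · refine ⟨ringE n s (a - 1), ringE_mem hn s (a - 1), spokeE n a, spokeE_mem hn a,
        ringE_ne_spokeE s (a - 1) a, by rw [hw1r', hw1s], ?_⟩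
      rw [edgeDist_spokeE hn, edgeDist_ringE hn, sd_not',
        show a - b = 0 - q by rw [hq]; ring, show a - 1 - b = 0 - (q + 1) by rw [hq]; ring,
        show a - 1 + 1 - b = 0 - q by rw [hq]; ring]
      simp only [cyc_neg]
      have e1 := val_add_one' hn q
      rw [cyc, cyc]
      split_ifs at e1 <;> rw [e1] <;> omega

lemma edge_collision_single (hn : 3 ≤ n) (s : Bool) (a : Fin n) :
    ∃ e₁ ∈ (GP n 1).edgeSet, ∃ e₂ ∈ (GP n 1).edgeSet, e₁ ≠ e₂ ∧
      edgeDist (GP n 1) (mkV n s a) e₁ = edgeDist (GP n 1) (mkV n s a) e₂ := by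
  obtain ⟨e₁, m1, e₂, m2, hne, h1, _⟩ := edge_collision hn s s a a
  exact ⟨e₁, m1, e₂, m2, hne, h1⟩

end Prism

namespace Prism
variable {n : ℕ} [NeZero n]

lemma cyc_inj_pair (hn : 3 ≤ n) (i j : Fin n) (h1 : cyc n i = cyc n j)
    (h2 : cyc n (i - 1) = cyc n (j - 1)) : i = j := by
  have hi := i.isLt
  have hj := j.isLt
  have e1 := val_sub_one hn i
  have e2 := val_sub_one hn j
  rw [cyc, cyc] at h1 h2
  apply Fin.ext
  split_ifs at e1 e2 <;> rw [e1, e2] at h2 <;> omega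

set_option maxHeartbeats 2000000 in
lemma minpair_inj (hn : 3 ≤ n) (i j : Fin n)
    (h1 : min (cyc n i) (cyc n (i + 1)) = min (cyc n j) (cyc n (j + 1)))
    (h2 : min (cyc n (i - 1)) (cyc n i) = min (cyc n (j - 1)) (cyc n j)) : i = j := by
  have hi := i.isLt
  have hj := j.isLt
  have e1 := val_sub_one hn i
  have e2 := val_sub_one hn j
  have e3 := val_add_one' hn i
  have e4 := val_add_one' hn j
  rw [cyc, cyc, cyc, cyc] at h1 h2
  apply Fin.ext
  split_ifs at e1 e2 e3 e4 <;> rw [e1, e2] at h2 <;> rw [e3, e4] at h1 <;> omega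

lemma cyc_inj_pair_odd (t : ℕ) (ht : 1 ≤ t) (hnt : n = 2 * t + 1) (i j : Fin n)
    (h1 : cyc n i = cyc n j)
    (h2 : cyc n (i - (t : Fin n)) = cyc n (j - (t : Fin n))) : i = j := by
  have hn : 3 ≤ n := by omega
  have hi := i.isLt
  have hj := j.isLt
  have htv : ((t : Fin n) : ℕ) = t := Fin.val_cast_of_lt (by omega)
  have e1 := val_sub_eq i (t : Fin n)
  have e2 := val_sub_eq j (t : Fin n)
  rw [htv] at e1 e2
  rw [cyc, cyc] at h1 h2
  apply Fin.ext
  split_ifs at e1 e2 <;> rw [e1, e2] at h2 <;> omega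

lemma cyc_sum_odd (t : ℕ) (ht : 1 ≤ t) (hnt : n = 2 * t + 1) (x : Fin n) :
    cyc n x + cyc n (x - (t : Fin n)) = t ∨ cyc n x + cyc n (x - (t : Fin n)) = t + 1 := by
  have hx := x.isLt
  have htv : ((t : Fin n) : ℕ) = t := Fin.val_cast_of_lt (by omega)
  have e1 := val_sub_eq x (t : Fin n)
  rw [htv] at e1
  rw [cyc, cyc]
  split_ifs at e1 <;> rw [e1] <;> omega

lemma zero_ne_one' (hn : 3 ≤ n) : (0 : Fin n) ≠ 1 := by
  intro h
  have := congrArg Fin.val h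
  rw [val_one hn] at this
  simp at this

end Prism

namespace Prism
variable {n : ℕ} [NeZero n]

theorem resolving3 (hn : 3 ≤ n) :
    IsResolving (GP n 1) {mkV n false 0, mkV n false 1, mkV n true 0} := by
  intro x y h
  obtain ⟨s, i, rfl⟩ := exists_mkV x
  obtain ⟨t, j, rfl⟩ := exists_mkV y
  have h1 := h (mkV n false 0) (by simp)
  have h2 := h (mkV n false 1) (by simp)
  have h3 := h (mkV n true 0) (by simp)
  rw [dist_eq hn, dist_eq hn, sub_zero, sub_zero] at h1 h3
  rw [dist_eq hn, dist_eq hn] at h2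
  cases s <;> cases t <;> simp only [sd, if_pos, if_neg, reduceIte, Bool.false_eq_true, Bool.true_eq_false, if_true, if_false] at h1 h2 h3
  · exact congrArg _ (cyc_inj_pair hn i j (by omega) (by omega))
  · exfalso; omega
  · exfalso; omega
  · exact congrArg _ (cyc_inj_pair hn i j (by omega) (by omega))

theorem resolving2_odd (t : ℕ) (ht : 1 ≤ t) (hnt : n = 2 * t + 1) :
    IsResolving (GP n 1) {mkV n false 0, mkV n false (t : Fin n)} := by
  have hn : 3 ≤ n := by omega
  intro x y h
  obtain ⟨s, i, rfl⟩ := exists_mkV x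
  obtain ⟨u, j, rfl⟩ := exists_mkV y
  have h1 := h (mkV n false 0) (by simp)
  have h2 := h (mkV n false (t : Fin n)) (by simp)
  rw [dist_eq hn, dist_eq hn, sub_zero, sub_zero] at h1
  rw [dist_eq hn, dist_eq hn] at h2
  have hs1 := cyc_sum_odd t ht hnt i
  have hs2 := cyc_sum_odd t ht hnt j
  cases s <;> cases u <;> simp only [sd, if_pos, if_neg, reduceIte, Bool.false_eq_true, Bool.true_eq_false, if_true, if_false] at h1 h2
  · exact congrArg _ (cyc_inj_pair_odd t ht hnt i j (by omega) (by omega))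
  · exfalso; omega
  · exfalso; omega
  · exact congrArg _ (cyc_inj_pair_odd t ht hnt i j (by omega) (by omega))

theorem edgegen3 (hn : 3 ≤ n) :
    IsEdgeGenerator (GP n 1) {mkV n false 0, mkV n false 1, mkV n true 0} := by
  intro e₁ he₁ e₂ he₂ h
  have h1 := h (mkV n false 0) (by simp)
  have h2 := h (mkV n false 1) (by simp)
  have h3 := h (mkV n true 0) (by simp)
  clear h
  rcases edge_cases hn e₁ he₁ with ⟨s, i, rfl⟩ | ⟨i, rfl⟩ <;>
    rcases edge_cases hn e₂ he₂ with ⟨u, j, rfl⟩ | ⟨j, rfl⟩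
  · rw [edgeDist_ringE hn, edgeDist_ringE hn, sub_zero, sub_zero, sub_zero, sub_zero] at h1 h3
    rw [edgeDist_ringE hn, edgeDist_ringE hn,
      show i + 1 - 1 = i from by ring, show j + 1 - 1 = j from by ring] at h2
    cases s <;> cases u <;> simp only [sd, if_pos, if_neg, reduceIte, Bool.false_eq_true, Bool.true_eq_false, if_true, if_false] at h1 h2 h3
    · rw [minpair_inj hn i j (by omega) (by omega)]
    · exfalso; omega
    · exfalso; omega
    · rw [minpair_inj hn i j (by omega) (by omega)]
  · rw [edgeDist_ringE hn, edgeDist_spokeE hn, sub_zero, sub_zero, sub_zero] at h1 h3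
    exfalso
    cases s <;> simp only [sd, if_pos, if_neg, reduceIte, Bool.false_eq_true, Bool.true_eq_false, if_true, if_false] at h1 h3 <;> omega
  · rw [edgeDist_ringE hn, edgeDist_spokeE hn, sub_zero, sub_zero, sub_zero] at h1 h3
    exfalso
    cases u <;> simp only [sd, if_pos, if_neg, reduceIte, Bool.false_eq_true, Bool.true_eq_false, if_true, if_false] at h1 h3 <;> omega
  · rw [edgeDist_spokeE hn, edgeDist_spokeE hn, sub_zero, sub_zero] at h1
    rw [edgeDist_spokeE hn, edgeDist_spokeE hn] at h2
    rw [cyc_inj_pair hn i j h1 h2]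

end Prism

namespace Prism

lemma subset_single {α : Type*} (S : Set α) (hfin : S.Finite) (h : S.ncard ≤ 1) (d : α) :
    ∃ w : α, S ⊆ {w} := by
  rcases S.eq_empty_or_nonempty with rfl | ⟨a, ha⟩
  · exact ⟨d, by simp⟩
  refine ⟨a, fun x hx => ?_⟩
  by_contra hx'
  simp only [Set.mem_singleton_iff] at hx'
  have hsub : ({a, x} : Set α) ⊆ S := by
    intro y hy
    simp only [Set.mem_insert_iff, Set.mem_singleton_iff] at hy
    rcases hy with rfl | rfl
    exacts [ha, hx]
  have h2 : ({a, x} : Set α).ncard = 2 := Set.ncard_pair (Ne.symm hx')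
  have := Set.ncard_le_ncard hsub hfin
  omega

lemma subset_pair {α : Type*} (S : Set α) (hfin : S.Finite) (h : S.ncard ≤ 2) (d : α) :
    ∃ w1 w2 : α, S ⊆ {w1, w2} := by
  rcases S.eq_empty_or_nonempty with rfl | ⟨a, ha⟩
  · exact ⟨d, d, by simp⟩
  rcases (S \ {a}).eq_empty_or_nonempty with he | ⟨b, hb⟩
  · exact ⟨a, a, by simpa using Set.diff_eq_empty.mp he⟩
  have hba : b ≠ a := by
    have := hb.2
    simpa using this
  refine ⟨a, b, fun x hx => ?_⟩
  by_contra hx'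
  simp only [Set.mem_insert_iff, Set.mem_singleton_iff, not_or] at hx'
  have hsub : ({a, b, x} : Set α) ⊆ S := by
    intro y hy
    simp only [Set.mem_insert_iff, Set.mem_singleton_iff] at hy
    rcases hy with rfl | rfl | rfl
    exacts [ha, hb.1, hx]
  have h3 : ({a, b, x} : Set α).ncard = 3 :=
    Set.ncard_eq_three.mpr ⟨a, b, x, Ne.symm hba, Ne.symm hx'.1, Ne.symm hx'.2, rfl⟩
  have := Set.ncard_le_ncard hsub hfin
  omega

variable {n : ℕ} [NeZero n]

theorem edgeMetricDim_eq_three (hn : 3 ≤ n) : edgeMetricDim (GP n 1) = 3 := by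
  have h3 : 3 ∈ {m | ∃ S : Set (Fin n ⊕ Fin n),
      S.Finite ∧ S.ncard = m ∧ IsEdgeGenerator (GP n 1) S} :=
    ⟨{mkV n false 0, mkV n false 1, mkV n true 0}, Set.toFinite _,
      Set.ncard_eq_three.mpr ⟨_, _, _, mkV_ne' (zero_ne_one' hn), mkV_ne (by simp),
        mkV_ne (by simp), rfl⟩, edgegen3 hn⟩
  have hmono : ∀ m ∈ {m | ∃ S : Set (Fin n ⊕ Fin n),
      S.Finite ∧ S.ncard = m ∧ IsEdgeGenerator (GP n 1) S}, 3 ≤ m := by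
    rintro m ⟨S, hfin, rfl, hgen⟩
    by_contra hm
    obtain ⟨w1, w2, hsub⟩ := subset_pair S hfin (by omega) (mkV n false 0)
    obtain ⟨s, a, rfl⟩ := exists_mkV w1
    obtain ⟨t, b, rfl⟩ := exists_mkV w2
    obtain ⟨e₁, m1, e₂, m2, hne, hd1, hd2⟩ := edge_collision hn s t a b
    refine hne (hgen e₁ m1 e₂ m2 fun w hw => ?_)
    rcases hsub hw with rfl | hw'
    · exact hd1
    · rw [Set.mem_singleton_iff] at hw'
      subst hw'
      exact hd2
  exact le_antisymm (Nat.sInf_le h3) (hmono _ (Nat.sInf_mem ⟨3, h3⟩))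

theorem metricDim_eq_three (hn : 3 ≤ n) (hev : n % 2 = 0) : metricDim (GP n 1) = 3 := by
  have h3 : 3 ∈ {m | ∃ S : Set (Fin n ⊕ Fin n),
      S.Finite ∧ S.ncard = m ∧ IsResolving (GP n 1) S} :=
    ⟨{mkV n false 0, mkV n false 1, mkV n true 0}, Set.toFinite _,
      Set.ncard_eq_three.mpr ⟨_, _, _, mkV_ne' (zero_ne_one' hn), mkV_ne (by simp),
        mkV_ne (by simp), rfl⟩, resolving3 hn⟩
  have hmono : ∀ m ∈ {m | ∃ S : Set (Fin n ⊕ Fin n),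
      S.Finite ∧ S.ncard = m ∧ IsResolving (GP n 1) S}, 3 ≤ m := by
    rintro m ⟨S, hfin, rfl, hres⟩
    by_contra hm
    obtain ⟨w1, w2, hsub⟩ := subset_pair S hfin (by omega) (mkV n false 0)
    obtain ⟨s, a, rfl⟩ := exists_mkV w1
    obtain ⟨t, b, rfl⟩ := exists_mkV w2
    obtain ⟨x, y, hne, hd1, hd2⟩ := vertex_collision_even hn hev s t a b
    refine hne (hres x y fun w hw => ?_)
    rcases hsub hw with rfl | hw'
    · exact hd1
    · rw [Set.mem_singleton_iff] at hw'
      subst hw'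
      exact hd2
  exact le_antisymm (Nat.sInf_le h3) (hmono _ (Nat.sInf_mem ⟨3, h3⟩))

theorem metricDim_eq_two (t : ℕ) (ht : 1 ≤ t) (hnt : n = 2 * t + 1) :
    metricDim (GP n 1) = 2 := by
  have hn : 3 ≤ n := by omega
  have hne0t : (0 : Fin n) ≠ (t : Fin n) := by
    intro hh
    have := congrArg Fin.val hh
    rw [Fin.val_cast_of_lt (by omega)] at this
    simp at this
    omega
  have h2 : 2 ∈ {m | ∃ S : Set (Fin n ⊕ Fin n),
      S.Finite ∧ S.ncard = m ∧ IsResolving (GP n 1) S} :=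
    ⟨{mkV n false 0, mkV n false (t : Fin n)}, Set.toFinite _,
      Set.ncard_pair (mkV_ne' hne0t), resolving2_odd t ht hnt⟩
  have hmono : ∀ m ∈ {m | ∃ S : Set (Fin n ⊕ Fin n),
      S.Finite ∧ S.ncard = m ∧ IsResolving (GP n 1) S}, 2 ≤ m := by
    rintro m ⟨S, hfin, rfl, hres⟩
    by_contra hm
    obtain ⟨w, hsub⟩ := subset_single S hfin (by omega) (mkV n false 0)
    obtain ⟨s, a, rfl⟩ := exists_mkV w
    obtain ⟨x, y, hne, hd1⟩ := vertex_collision_single hn s a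
    refine hne (hres x y fun w hw => ?_)
    rcases hsub hw with rfl
    exact hd1
  exact le_antisymm (Nat.sInf_le h2) (hmono _ (Nat.sInf_mem ⟨2, h2⟩))

end Prism

/-- For even `n = 2t` (`t ≥ 2`), `β_E(GP(n,1)) = β(GP(n,1)) = 3`;
for odd `n = 2t+1` (`t ≥ 1`), `β_E(GP(n,1)) = 3 > β(GP(n,1)) = 2`. -/
theorem stmt6 :
    (∀ t : ℕ, 2 ≤ t →
      edgeMetricDim (GP (2 * t) 1) = 3 ∧ metricDim (GP (2 * t) 1) = 3) ∧
    (∀ t : ℕ, 1 ≤ t →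
      edgeMetricDim (GP (2 * t + 1) 1) = 3 ∧ metricDim (GP (2 * t + 1) 1) = 2 ∧
        metricDim (GP (2 * t + 1) 1) < edgeMetricDim (GP (2 * t + 1) 1)) := by
  constructor
  · intro t ht
    haveI : NeZero (2 * t) := ⟨by omega⟩
    exact ⟨Prism.edgeMetricDim_eq_three (by omega),
      Prism.metricDim_eq_three (by omega) (by omega)⟩
  · intro t ht
    haveI : NeZero (2 * t + 1) := ⟨by omega⟩
    have h1 := Prism.edgeMetricDim_eq_three (n := 2 * t + 1) (by omega)
    have h2 := Prism.metricDim_eq_two (n := 2 * t + 1) t ht rfl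
    exact ⟨h1, h2, by omega⟩
end

section
/- The edge metric dimension of the Petersen graph GP(5,2) equals 4, with {u_0, u_1, u_3, v_3} an edge metric basis. -/
open SimpleGraph

/- ### Auxiliary machinery -/

def gpRel (n k : ℕ) : (Fin n ⊕ Fin n) → (Fin n ⊕ Fin n) → Bool
  | Sum.inl i, Sum.inl j => (j : ℕ) == ((i : ℕ) + 1) % n
  | Sum.inl i, Sum.inr j => i == j
  | Sum.inr i, Sum.inr j => (j : ℕ) == ((i : ℕ) + k) % n
  | _, _ => false

lemma gp_adj_iff (n k : ℕ) (a b : Fin n ⊕ Fin n) :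
    (GP n k).Adj a b ↔ a ≠ b ∧ (gpRel n k a b || gpRel n k b a) := by
  rw [GP, SimpleGraph.fromRel_adj]
  rcases a with i | i <;> rcases b with j | j <;> simp [gpRel, Fin.ext_iff]

instance GPdec (n k : ℕ) : DecidableRel (GP n k).Adj := fun a b =>
  decidable_of_iff' _ (gp_adj_iff n k a b)

abbrev V5 := Fin 5 ⊕ Fin 5
abbrev P : SimpleGraph V5 := GP 5 2

/-- candidate distance function -/
def pd (x y : V5) : ℕ := if x = y then 0 else if P.Adj x y then 1 else 2

lemma common : ∀ x y : V5, x = y ∨ P.Adj x y ∨ ∃ z, P.Adj x z ∧ P.Adj z y := by decide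

lemma dist_eq (x y : V5) : P.dist x y = pd x y := by
  unfold pd
  split_ifs with h1 h2
  · subst h1; exact SimpleGraph.dist_self
  · exact SimpleGraph.dist_eq_one_iff_adj.2 h2
  · rcases common x y with h | h | ⟨z, hxz, hzy⟩
    · exact absurd h h1
    · exact absurd h h2
    · have hle : P.dist x y ≤ 2 := by
        have := SimpleGraph.dist_le (hxz.toWalk.append hzy.toWalk)
        simpa [SimpleGraph.Walk.length_append] using this
      have h0 : P.dist x y ≠ 0 := by
        intro h
        rw [SimpleGraph.dist_eq_zero_iff_eq_or_not_reachable] at h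
        rcases h with h | h
        · exact h1 h
        · exact h (hxz.toWalk.append hzy.toWalk).reachable
      have h1' : P.dist x y ≠ 1 := fun h => h2 (SimpleGraph.dist_eq_one_iff_adj.1 h)
      omega

lemma edgeDist_mk_s7 (w x y : V5) : edgeDist P w s(x, y) = pd w x ⊓ pd w y := by
  simp [edgeDist, dist_eq]

lemma edgeDist_mk' (w : V5) (p : V5 × V5) :
    edgeDist P w (Sym2.mk p.1 p.2) = pd w p.1 ⊓ pd w p.2 := by
  cases p; exact edgeDist_mk_s7 w _ _

lemma upper_decide : ∀ x y x' y' : V5, P.Adj x y → P.Adj x' y' →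
    (pd (Sum.inl 0) x ⊓ pd (Sum.inl 0) y = pd (Sum.inl 0) x' ⊓ pd (Sum.inl 0) y') →
    (pd (Sum.inl 1) x ⊓ pd (Sum.inl 1) y = pd (Sum.inl 1) x' ⊓ pd (Sum.inl 1) y') →
    (pd (Sum.inl 3) x ⊓ pd (Sum.inl 3) y = pd (Sum.inl 3) x' ⊓ pd (Sum.inl 3) y') →
    (pd (Sum.inr 3) x ⊓ pd (Sum.inr 3) y = pd (Sum.inr 3) x' ⊓ pd (Sum.inr 3) y') →
    (x = x' ∧ y = y') ∨ (x = y' ∧ y = x') := by decide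

def E : Fin 15 → V5 × V5 :=
  ![(Sum.inl 0, Sum.inl 1), (Sum.inl 1, Sum.inl 2), (Sum.inl 2, Sum.inl 3),
    (Sum.inl 3, Sum.inl 4), (Sum.inl 4, Sum.inl 0),
    (Sum.inl 0, Sum.inr 0), (Sum.inl 1, Sum.inr 1), (Sum.inl 2, Sum.inr 2),
    (Sum.inl 3, Sum.inr 3), (Sum.inl 4, Sum.inr 4),
    (Sum.inr 0, Sum.inr 2), (Sum.inr 1, Sum.inr 3), (Sum.inr 2, Sum.inr 4),
    (Sum.inr 3, Sum.inr 0), (Sum.inr 4, Sum.inr 1)]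

lemma E_adj : ∀ i : Fin 15, P.Adj (E i).1 (E i).2 := by decide

lemma lower_decide : ∀ a b c : V5, ∃ i j : Fin 15,
    ¬(((E i).1 = (E j).1 ∧ (E i).2 = (E j).2) ∨ ((E i).1 = (E j).2 ∧ (E i).2 = (E j).1)) ∧
    pd a (E i).1 ⊓ pd a (E i).2 = pd a (E j).1 ⊓ pd a (E j).2 ∧
    pd b (E i).1 ⊓ pd b (E i).2 = pd b (E j).1 ⊓ pd b (E j).2 ∧
    pd c (E i).1 ⊓ pd c (E i).2 = pd c (E j).1 ⊓ pd c (E j).2 := by decide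

def S4 : Set V5 := {Sum.inl 0, Sum.inl 1, Sum.inl 3, Sum.inr 3}

lemma gen_S4 : IsEdgeGenerator P S4 := by
  intro e₁ he₁ e₂ he₂ h
  induction e₁ using Sym2.ind with
  | _ x y =>
  induction e₂ using Sym2.ind with
  | _ x' y' =>
  rw [SimpleGraph.mem_edgeSet] at he₁ he₂
  have h0 := h (Sum.inl 0) (by simp [S4])
  have h1 := h (Sum.inl 1) (by simp [S4])
  have h3 := h (Sum.inl 3) (by simp [S4])
  have h3' := h (Sum.inr 3) (by simp [S4])
  rw [edgeDist_mk_s7, edgeDist_mk_s7] at h0 h1 h3 h3'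
  rcases upper_decide x y x' y' he₁ he₂ h0 h1 h3 h3' with ⟨rfl, rfl⟩ | ⟨rfl, rfl⟩
  · rfl
  · exact Sym2.eq_swap

/-- No set of at most 3 vertices is an edge generator. -/
lemma no_small_gen (S : Set V5) (hS : IsEdgeGenerator P S) (a b c : V5)
    (hsub : S ⊆ {a, b, c}) : False := by
  obtain ⟨i, j, hne, ha, hb, hc⟩ := lower_decide a b c
  have hij : Sym2.mk (E i).1 (E i).2 = Sym2.mk (E j).1 (E j).2 := by
    refine hS _ ?_ _ ?_ ?_
    · exact (P.mem_edgeSet).2 (E_adj i)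
    · exact (P.mem_edgeSet).2 (E_adj j)
    · intro w hw
      rw [edgeDist_mk', edgeDist_mk']
      rcases hsub hw with rfl | rfl | rfl <;> assumption
  rw [Sym2.eq_iff] at hij
  exact hne (by exact_mod_cast hij)

/-- `β_E(GP(5,2)) = 4` with `{u₀,u₁,u₃,v₃}` an edge metric basis. -/
theorem stmt7 :
    edgeMetricDim (GP 5 2) = 4 ∧
    IsEdgeGenerator (GP 5 2)
      {Sum.inl 0, Sum.inl 1, Sum.inl 3, Sum.inr 3} ∧
    ({Sum.inl 0, Sum.inl 1, Sum.inl 3, Sum.inr 3} : Set (Fin 5 ⊕ Fin 5)).ncard = 4 := by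
  have hcard : ({Sum.inl 0, Sum.inl 1, Sum.inl 3, Sum.inr 3} : Set (Fin 5 ⊕ Fin 5)).ncard = 4 := by
    have h : ({Sum.inl 0, Sum.inl 1, Sum.inl 3, Sum.inr 3} : Set (Fin 5 ⊕ Fin 5)) =
        (↑({Sum.inl 0, Sum.inl 1, Sum.inl 3, Sum.inr 3} : Finset (Fin 5 ⊕ Fin 5)) : Set _) := by
      simp
    rw [h, Set.ncard_coe_finset]
    decide
  refine ⟨?_, gen_S4, hcard⟩
  have hmem : 4 ∈ {n | ∃ S : Set V5, S.Finite ∧ S.ncard = n ∧ IsEdgeGenerator P S} :=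
    ⟨S4, Set.toFinite _, hcard, gen_S4⟩
  refine le_antisymm (Nat.sInf_le hmem) (le_csInf ⟨4, hmem⟩ ?_)
  rintro n ⟨S, hfin, rfl, hgen⟩
  by_contra hlt
  push_neg at hlt
  -- S has at most 3 elements; cover it by a 3-element set {a,b,c}
  have hcard3 : hfin.toFinset.card ≤ 3 := by
    rw [← Set.ncard_eq_toFinset_card S hfin]
    omega
  obtain ⟨t, hst, htc⟩ := Finset.exists_superset_card_eq hcard3 (by decide)
  obtain ⟨a, b, c, -, -, -, rfl⟩ := Finset.card_eq_three.1 htc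
  refine no_small_gen S hgen a b c ?_
  intro w hw
  have : w ∈ ({a, b, c} : Finset V5) := hst (hfin.mem_toFinset.2 hw)
  simpa using this
end

section
/- Let G be a connected graph and S an edge metric generator with |S| = k. Then no vertex of S has degree greater than 2^{k−1}; in particular, if S contains a vertex of degree δ, then 2^{k−1} ≥ δ. -/
open SimpleGraph

/-- If `S` is an edge metric generator with `|S| = k`, then no vertex of `S`
has degree greater than `2^(k-1)`. -/
theorem stmt17 {V : Type*} [Fintype V] (G : SimpleGraph V) [DecidableRel G.Adj]
    (hc : G.Connected) (S : Set V) (k : ℕ) (hfin : S.Finite) (hcard : S.ncard = k)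
    (hgen : IsEdgeGenerator G S) :
    ∀ w ∈ S, G.degree w ≤ 2 ^ (k - 1) := by
  classical
  intro w hw
  have hfin' : (S \ {w}).Finite := hfin.subset Set.diff_subset
  haveI : Fintype ↥(S \ {w}) := hfin'.fintype
  -- the bool vector map
  let f : V → (↥(S \ {w}) → Bool) :=
    fun u s => decide (edgeDist G (s : V) s(w, u) = G.dist (s : V) w)
  -- the two-values claim
  have key : ∀ u, G.Adj w u → ∀ s : V, s ≠ w →
      edgeDist G s s(w, u) = G.dist s w ∨ edgeDist G s s(w, u) = G.dist s w - 1 := by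
    intro u hu s hs
    have hed : edgeDist G s s(w, u) = min (G.dist s w) (G.dist s u) := rfl
    rcases le_or_gt (G.dist s w) (G.dist s u) with h | h
    · left; rw [hed, min_eq_left h]
    · right
      rw [hed, min_eq_right h.le]
      have h1 : G.dist s w ≤ G.dist s u + 1 := by
        have := hc.dist_triangle (u := s) (v := u) (w := w)
        rwa [dist_eq_one_iff_adj.mpr hu.symm] at this
      omega
  have hinj : Set.InjOn f (G.neighborFinset w : Set V) := by
    intro u hu u' hu' hfe
    simp only [Finset.mem_coe, SimpleGraph.mem_neighborFinset] at hu hu'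
    have heq : s(w, u) = s(w, u') := by
      apply hgen _ (by simpa using hu) _ (by simpa using hu')
      intro s hs
      by_cases hsw : s = w
      · subst hsw
        show min (G.dist s s) (G.dist s u) = min (G.dist s s) (G.dist s u')
        simp [SimpleGraph.dist_self]
      · have hbool := congrFun hfe ⟨s, hs, hsw⟩
        simp only [f, decide_eq_decide] at hbool
        have hd : 0 < G.dist s w := hc.pos_dist_of_ne (fun h => hsw h)
        rcases key u hu s hsw with h1 | h1 <;> rcases key u' hu' s hsw with h2 | h2 <;>
          omega
    rw [Sym2.eq_iff] at heq
    rcases heq with ⟨_, h⟩ | ⟨h1, h2⟩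
    · exact h
    · exact h2.trans h1
  have hcard2 : (S \ {w}).ncard = k - 1 := by
    rw [Set.ncard_diff_singleton_of_mem hw, hcard]
  calc G.degree w = (G.neighborFinset w).card := rfl
    _ ≤ (Finset.univ : Finset (↥(S \ {w}) → Bool)).card :=
        Finset.card_le_card_of_injOn f (fun _ _ => Finset.mem_univ _) hinj
    _ = 2 ^ (k - 1) := by
        rw [Finset.card_univ, Fintype.card_fun, Fintype.card_bool]
        congr 1
        rw [← Nat.card_eq_fintype_card, Nat.card_coe_set_eq, hcard2]
end
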